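/- arXiv:2402.15763 — 8 statements merged into one kernel-verified Lean document; each statement's English description precedes it below -/
import Mathlib

section
/- Let S be a bounded antilinear involution on H and A, B ∈ B(H) with S*B*S* bounded. Then (A⊗B)F is S-crossable and Cross_S((A⊗B)F) = (S*B*S* ⊗ A)F, where F is the tensor flip. -/
noncomputable section
open scoped InnerProductSpace ComplexConjugate

variable {H K : Type*}

/-- A realization of the Hilbert space tensor square of `H` on a Hilbert space `K`. -/
structure TensorSquare (H K : Type*) [NormedAddCommGroup H] [InnerProductSpace ℂ H]
    [NormedAddCommGroup K] [InnerProductSpace ℂ K] : Type _ where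
  tmul : H → H → K
  tmul_add_left : ∀ a a' b, tmul (a + a') b = tmul a b + tmul a' b
  tmul_add_right : ∀ a b b', tmul a (b + b') = tmul a b + tmul a b'
  tmul_smul_left : ∀ (c : ℂ) a b, tmul (c • a) b = c • tmul a b
  tmul_smul_right : ∀ (c : ℂ) a b, tmul a (c • b) = c • tmul a b
  inner_tmul : ∀ a b c d, ⟪tmul a b, tmul c d⟫_ℂ = ⟪a, c⟫_ℂ * ⟪b, d⟫_ℂ
  dense_span : Dense (↑(Submodule.span ℂ (Set.range fun p : H × H => tmul p.1 p.2)) : Set K)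

/-- A densely defined closed antilinear involution `S` on `H`, together with its adjoint `S*`. -/
structure AntiInvolution (H : Type*) [NormedAddCommGroup H] [InnerProductSpace ℂ H] : Type _ where
  dom : Submodule ℂ H
  toFun : H → H
  dense_dom : Dense (dom : Set H)
  map_add : ∀ x ∈ dom, ∀ y ∈ dom, toFun (x + y) = toFun x + toFun y
  map_smul : ∀ (c : ℂ), ∀ x ∈ dom, toFun (c • x) = (starRingEnd ℂ c) • toFun x
  invol_mem : ∀ x ∈ dom, toFun x ∈ dom
  invol : ∀ x ∈ dom, toFun (toFun x) = x
  closed_graph : IsClosed {p : H × H | p.1 ∈ dom ∧ toFun p.1 = p.2}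
  adjDom : Submodule ℂ H
  adjFun : H → H
  dense_adjDom : Dense (adjDom : Set H)
  adj_spec : ∀ y ∈ adjDom, ∀ x ∈ dom, ⟪adjFun y, x⟫_ℂ = ⟪toFun x, y⟫_ℂ
  adj_max : ∀ y z : H, (∀ x ∈ dom, ⟪z, x⟫_ℂ = ⟪toFun x, y⟫_ℂ) → y ∈ adjDom

section
variable [NormedAddCommGroup H] [InnerProductSpace ℂ H]
  [NormedAddCommGroup K] [InnerProductSpace ℂ K]

/-- The crossing relation (unbounded `S`): `Tc = Cross_S(T)`. -/
def CrossRelU (τ : TensorSquare H K) (S : AntiInvolution H) (T Tc : K →L[ℂ] K) : Prop :=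
  ∀ φ₁ ∈ S.dom, ∀ ψ₁ ∈ S.dom, ∀ φ₂ ∈ S.adjDom, ∀ ψ₂ ∈ S.adjDom,
    ⟪τ.tmul φ₁ φ₂, Tc (τ.tmul ψ₁ ψ₂)⟫_ℂ
      = ⟪τ.tmul φ₂ (S.adjFun ψ₂), T (τ.tmul (S.toFun φ₁) ψ₁)⟫_ℂ

/-- The crossing relation for an everywhere defined (bounded) antilinear involution `S`
with adjoint `Sstar`. -/
def CrossRelB (τ : TensorSquare H K) (S Sstar : H →SL[starRingEnd ℂ] H) (T Tc : K →L[ℂ] K) :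
    Prop :=
  ∀ φ₁ φ₂ ψ₁ ψ₂ : H,
    ⟪τ.tmul φ₁ φ₂, Tc (τ.tmul ψ₁ ψ₂)⟫_ℂ = ⟪τ.tmul φ₂ (Sstar ψ₂), T (τ.tmul (S φ₁) ψ₁)⟫_ℂ

end

/-- Let `S` be a bounded antilinear involution on `H` with adjoint `S*`,
and `A, B ∈ B(H)`. Then `(A ⊗ B)F` is `S`-crossable and
`Cross_S((A ⊗ B)F) = (S* B* S* ⊗ A) F`, where `F` is the tensor flip.
Here `T` realizes `(A ⊗ B)F` and `Tc` realizes `(S* B* S* ⊗ A)F` on the tensor square. -/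
theorem cross_of_prod_times_flip
    [NormedAddCommGroup H] [InnerProductSpace ℂ H] [CompleteSpace H]
    [NormedAddCommGroup K] [InnerProductSpace ℂ K] [CompleteSpace K]
    (τ : TensorSquare H K)
    (S Sstar : H →SL[starRingEnd ℂ] H)
    (hinv : ∀ x : H, S (S x) = x)
    (hadj : ∀ x y : H, ⟪Sstar y, x⟫_ℂ = ⟪S x, y⟫_ℂ)
    (A B : H →L[ℂ] H)
    (T : K →L[ℂ] K) (hT : ∀ v w : H, T (τ.tmul v w) = τ.tmul (A w) (B v))
    (Tc : K →L[ℂ] K)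
    (hTc : ∀ v w : H,
      Tc (τ.tmul v w) = τ.tmul (Sstar (ContinuousLinearMap.adjoint B (Sstar w))) (A v)) :
    CrossRelB τ S Sstar T Tc := by
  intro φ₁ φ₂ ψ₁ ψ₂
  rw [hTc, hT, τ.inner_tmul, τ.inner_tmul]
  have h1 : ⟪φ₁, Sstar (ContinuousLinearMap.adjoint B (Sstar ψ₂))⟫_ℂ
      = ⟪Sstar ψ₂, B (S φ₁)⟫_ℂ := by
    rw [← inner_conj_symm, hadj, ContinuousLinearMap.adjoint_inner_right, inner_conj_symm]
  rw [h1]; ring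
end
end

section
/- Let H = L²(ℝ), (Sf)(x) = conj(f(x)), and w ∈ L^∞(ℝ²). Define the weighted flip (F_w ψ)(x,y) = w(x,y)ψ(y,x) on L²(ℝ²) ≅ H⊗H. Then F_w is S-crossable with Cross_S(F_w) = F_{ŵ} where ŵ(x,y) = w(y,x), and F_w is S-crossing symmetric if and only if w is real-valued (a.e.). -/
noncomputable section
open scoped InnerProductSpace ComplexConjugate

variable {H K : Type*}

open MeasureTheory

/-- Let `H = L²(ℝ)` with `S` pointwise complex conjugation (an antiunitary
involution, `S* = S`), and `w ∈ L^∞(ℝ²)`. The weighted flip `(F_w ψ)(x,y) = w(x,y) ψ(y,x)`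
on `L²(ℝ²) ≅ H ⊗ H` is `S`-crossable with `Cross_S(F_w) = F_{ŵ}`, `ŵ(x,y) = w(y,x)`, and
`F_w` is `S`-crossing symmetric iff `w` is real-valued a.e. -/
theorem weighted_flip_crossing
    (w : ℝ × ℝ → ℂ) (hw : Measurable w) (hwbdd : ∃ C : ℝ, ∀ p, ‖w p‖ ≤ C)
    (τ : TensorSquare (Lp ℂ 2 (volume : Measure ℝ)) (Lp ℂ 2 (volume : Measure (ℝ × ℝ))))
    (hτ : ∀ f g : Lp ℂ 2 (volume : Measure ℝ),
      (τ.tmul f g : ℝ × ℝ → ℂ) =ᵐ[volume] fun p => f p.1 * g p.2)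
    (S : Lp ℂ 2 (volume : Measure ℝ) →SL[starRingEnd ℂ] Lp ℂ 2 (volume : Measure ℝ))
    (hS : ∀ f : Lp ℂ 2 (volume : Measure ℝ), (S f : ℝ → ℂ) =ᵐ[volume] fun x => conj (f x))
    (Fw Fw' : Lp ℂ 2 (volume : Measure (ℝ × ℝ)) →L[ℂ] Lp ℂ 2 (volume : Measure (ℝ × ℝ)))
    (hFw : ∀ ψ : Lp ℂ 2 (volume : Measure (ℝ × ℝ)),
      (Fw ψ : ℝ × ℝ → ℂ) =ᵐ[volume] fun p => w p * ψ (p.2, p.1))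
    (hFw' : ∀ ψ : Lp ℂ 2 (volume : Measure (ℝ × ℝ)),
      (Fw' ψ : ℝ × ℝ → ℂ) =ᵐ[volume] fun p => w (p.2, p.1) * ψ (p.2, p.1)) :
    CrossRelB τ S S Fw Fw' ∧
    (ContinuousLinearMap.adjoint Fw = Fw' ↔ ∀ᵐ p ∂(volume : Measure (ℝ × ℝ)), (w p).im = 0) := by
  obtain ⟨C, hC⟩ := hwbdd
  have hswap : MeasurePreserving (Prod.swap : ℝ×ℝ → ℝ×ℝ)
      (volume : Measure (ℝ×ℝ)) volume := by
    rw [Measure.volume_eq_prod]; exact Measure.measurePreserving_swap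
  have hemb : MeasurableEmbedding (Prod.swap : ℝ×ℝ → ℝ×ℝ) :=
    MeasurableEquiv.prodComm.measurableEmbedding
  have hint : ∀ g : ℝ×ℝ → ℂ, (∫ p : ℝ×ℝ, g (p.2, p.1)) = ∫ p, g p :=
    fun g => hswap.integral_comp hemb g
  have hcomp : ∀ {f g : ℝ×ℝ → ℂ}, f =ᵐ[volume] g →
      (fun p : ℝ×ℝ => f (p.2, p.1)) =ᵐ[(volume : Measure (ℝ×ℝ))] (fun p => g (p.2, p.1)) :=
    fun h => hswap.quasiMeasurePreserving.ae_eq_comp h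
  have hinner : ∀ f g : Lp ℂ 2 (volume : Measure (ℝ×ℝ)),
      ⟪f, g⟫_ℂ = ∫ p, conj (f p) * g p := by
    intro f g
    rw [L2.inner_def]
    simp [RCLike.inner_apply]
    exact integral_congr_ae (Filter.Eventually.of_forall fun a => mul_comm _ _)
  have key1 : ∀ ψ χ : Lp ℂ 2 (volume : Measure (ℝ×ℝ)),
      ⟪ψ, Fw χ⟫_ℂ = ∫ p : ℝ×ℝ, w p * (conj (ψ p) * χ (p.2, p.1)) := by
    intro ψ χ
    rw [hinner]
    refine integral_congr_ae ?_
    filter_upwards [hFw χ] with p hp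
    rw [hp]; ring
  have key2 : ∀ ψ χ : Lp ℂ 2 (volume : Measure (ℝ×ℝ)),
      ⟪Fw' ψ, χ⟫_ℂ = ∫ p : ℝ×ℝ, conj (w p) * (conj (ψ p) * χ (p.2, p.1)) := by
    intro ψ χ
    rw [hinner, ← hint (fun p => conj (w p) * (conj (ψ p) * χ (p.2, p.1)))]
    refine integral_congr_ae ?_
    filter_upwards [hFw' ψ] with p hp
    rw [hp]
    simp only [map_mul, Prod.mk.eta]
    ring
  -- integrability of the paired integrands
  have hintg : ∀ ψ χ : Lp ℂ 2 (volume : Measure (ℝ×ℝ)),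
      Integrable (fun p : ℝ×ℝ => conj (ψ p) * χ (p.2, p.1)) volume := by
    intro ψ χ
    have h1 : Integrable (fun p : ℝ×ℝ => conj ((ψ : ℝ×ℝ → ℂ) (p.2,p.1)) * χ p) volume := by
      have := L2.integrable_inner (𝕜 := ℂ) (Lp.compMeasurePreserving Prod.swap hswap ψ) χ
      simp only [RCLike.inner_apply] at this
      refine this.congr ?_
      filter_upwards [Lp.coeFn_compMeasurePreserving ψ hswap] with p hp
      rw [hp]; exact mul_comm _ _
    have h2 := (hswap.integrable_comp_emb hemb).mpr h1
    refine h2.congr (Filter.Eventually.of_forall fun p => ?_)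
    simp [Function.comp, Prod.swap]
  have hsnd : ∀ {f g : ℝ → ℂ}, f =ᵐ[(volume : Measure ℝ)] g →
      (fun p : ℝ×ℝ => f p.2) =ᵐ[(volume : Measure (ℝ×ℝ))] (fun p => g p.2) := by
    intro f g hfg
    rw [Measure.volume_eq_prod]
    exact Measure.quasiMeasurePreserving_snd.ae_eq_comp hfg
  have cross : CrossRelB τ S S Fw Fw' := by
    intro φ₁ φ₂ ψ₁ ψ₂
    have L : ⟪τ.tmul φ₁ φ₂, Fw' (τ.tmul ψ₁ ψ₂)⟫_ℂ
        = ∫ p : ℝ×ℝ, conj ((φ₁ : ℝ → ℂ) p.1 * (φ₂ : ℝ → ℂ) p.2)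
            * (w (p.2, p.1) * ((ψ₁ : ℝ → ℂ) p.2 * (ψ₂ : ℝ → ℂ) p.1)) := by
      rw [hinner]
      refine integral_congr_ae ?_
      filter_upwards [hτ φ₁ φ₂, hFw' (τ.tmul ψ₁ ψ₂), hcomp (hτ ψ₁ ψ₂)] with p h1 h2 h3
      simp only [h1, h2, h3]
    have R : ⟪τ.tmul φ₂ (S ψ₂), Fw (τ.tmul (S φ₁) ψ₁)⟫_ℂ
        = ∫ p : ℝ×ℝ, conj ((φ₂ : ℝ → ℂ) p.1 * conj ((ψ₂ : ℝ → ℂ) p.2))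
            * (w p * (conj ((φ₁ : ℝ → ℂ) p.2) * (ψ₁ : ℝ → ℂ) p.1)) := by
      rw [hinner]
      refine integral_congr_ae ?_
      filter_upwards [hτ φ₂ (S ψ₂), hsnd (hS ψ₂), hFw (τ.tmul (S φ₁) ψ₁),
        hcomp (hτ (S φ₁) ψ₁), hsnd (hS φ₁)] with p h1 h2 h3 h4 h5
      simp only [h1, h2, h3, h4, h5]
    rw [L, R, ← hint (fun p => conj ((φ₂ : ℝ → ℂ) p.1 * conj ((ψ₂ : ℝ → ℂ) p.2))
          * (w p * (conj ((φ₁ : ℝ → ℂ) p.2) * (ψ₁ : ℝ → ℂ) p.1)))]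
    refine integral_congr_ae (Filter.Eventually.of_forall fun p => ?_)
    simp only [map_mul, Complex.conj_conj]
    ring
  refine ⟨cross, ?_⟩
  constructor
  · -- forward
    intro h
    have hall : ∀ ψ χ : Lp ℂ 2 (volume : Measure (ℝ×ℝ)),
        ⟪Fw' ψ, χ⟫_ℂ = ⟪ψ, Fw χ⟫_ℂ := by
      intro ψ χ
      rw [← h]
      exact (ContinuousLinearMap.adjoint_inner_left Fw χ ψ)
    have hset : ∀ A : Set (ℝ×ℝ), MeasurableSet A → volume A < ⊤ →
        ∫ p in A, (conj (w p) - w p) = 0 := by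
      intro A hA hAfin
      set B : Set (ℝ×ℝ) := Prod.swap ⁻¹' A with hB
      have hBm : MeasurableSet B := hA.preimage measurable_swap
      have hBfin : volume B < ⊤ := by
        rw [hB, hswap.measure_preimage hA.nullMeasurableSet]; exact hAfin
      set ψ : Lp ℂ 2 (volume : Measure (ℝ×ℝ)) := indicatorConstLp 2 hA hAfin.ne (1:ℂ)
      set χ : Lp ℂ 2 (volume : Measure (ℝ×ℝ)) := indicatorConstLp 2 hBm hBfin.ne (1:ℂ)
      have hψ : (ψ : ℝ×ℝ → ℂ) =ᵐ[volume] A.indicator fun _ => 1 := indicatorConstLp_coeFn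
      have hχ : (χ : ℝ×ℝ → ℂ) =ᵐ[volume] B.indicator fun _ => 1 := indicatorConstLp_coeFn
      have h1 := hall ψ χ
      rw [key1, key2] at h1
      have e1 : (∫ p : ℝ×ℝ, conj (w p) * (conj (ψ p) * χ (p.2, p.1)))
          = ∫ p in A, conj (w p) := by
        rw [← integral_indicator hA]
        refine integral_congr_ae ?_
        filter_upwards [hψ, hcomp hχ] with p hp1 hp2
        rw [hp1, hp2]
        by_cases hpA : p ∈ A
        · have hpB : (p.2, p.1) ∈ B := by simpa [hB] using hpA
          simp [Set.indicator_of_mem, hpA, hpB]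
        · have hpB : (p.2, p.1) ∉ B := by simpa [hB] using hpA
          simp [Set.indicator_of_notMem, hpA, hpB]
      have e2 : (∫ p : ℝ×ℝ, w p * (conj (ψ p) * χ (p.2, p.1)))
          = ∫ p in A, w p := by
        rw [← integral_indicator hA]
        refine integral_congr_ae ?_
        filter_upwards [hψ, hcomp hχ] with p hp1 hp2
        rw [hp1, hp2]
        by_cases hpA : p ∈ A
        · have hpB : (p.2, p.1) ∈ B := by simpa [hB] using hpA
          simp [Set.indicator_of_mem, hpA, hpB]
        · have hpB : (p.2, p.1) ∉ B := by simpa [hB] using hpA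
          simp [Set.indicator_of_notMem, hpA, hpB]
      rw [e1, e2] at h1
      have hi1 : IntegrableOn (fun p => conj (w p)) A volume :=
        Measure.integrableOn_of_bounded hAfin.ne
          ((continuous_star.measurable.comp hw).aestronglyMeasurable) (Filter.Eventually.of_forall fun p => by
            simpa using hC p)
      have hi2 : IntegrableOn w A volume :=
        Measure.integrableOn_of_bounded hAfin.ne hw.aestronglyMeasurable
          (Filter.Eventually.of_forall fun p => hC p)
      rw [integral_sub hi1 hi2, h1, sub_self]
    have hzero : (fun p : ℝ×ℝ => conj (w p) - w p) =ᵐ[volume] 0 := by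
      refine ae_eq_zero_of_forall_setIntegral_eq_of_sigmaFinite ?_ ?_
      · intro s hs hsfin
        refine Measure.integrableOn_of_bounded (M := C + C) hsfin.ne
          (((continuous_star.measurable.comp hw).sub hw).aestronglyMeasurable) (Filter.Eventually.of_forall fun p => ?_)
        calc ‖conj (w p) - w p‖ ≤ ‖conj (w p)‖ + ‖w p‖ := norm_sub_le _ _
          _ ≤ C + C := by simpa using add_le_add (by simpa using hC p) (hC p)
      · intro s hs hsfin
        exact hset s hs hsfin
    filter_upwards [hzero] with p hp
    have hp' : conj (w p) - w p = 0 := hp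
    have : conj (w p) = w p := by rwa [sub_eq_zero] at hp'
    exact Complex.conj_eq_iff_im.mp this
  · -- reverse
    intro h
    symm
    rw [ContinuousLinearMap.eq_adjoint_iff]
    intro ψ χ
    rw [key1, key2]
    refine integral_congr_ae ?_
    filter_upwards [h] with p hp
    rw [Complex.conj_eq_iff_im.mpr hp]
end
end

section
/- Let H be a finite-dimensional complex Hilbert space with an antilinear involution S, let {e_n} be an orthonormal basis, ξ_S = Σ_n e_n ⊗ S e_n, and P_S = |ξ_S⟩⟨ξ_S| (so P_S(v⊗w) = ⟨Sv,w⟩ ξ_S). Then Cross_S(1) = P_S and Cross_S(P_S) = 1. In particular ξ_S is independent of the chosen orthonormal basis. -/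
noncomputable section
open scoped InnerProductSpace ComplexConjugate

variable {H K : Type*}

lemma key_inner_xi {H K : Type*} [NormedAddCommGroup H] [InnerProductSpace ℂ H]
    [NormedAddCommGroup K] [InnerProductSpace ℂ K]
    (τ : TensorSquare H K) (S : H →SL[starRingEnd ℂ] H)
    {ι' : Type*} [Fintype ι'] (b' : OrthonormalBasis ι' ℂ H) (φ₁ φ₂ : H) :
    ⟪τ.tmul φ₁ φ₂, ∑ n, τ.tmul (b' n) (S (b' n))⟫_ℂ = ⟪φ₂, S φ₁⟫_ℂ := by
  have hφ : S φ₁ = ∑ n, ⟪φ₁, b' n⟫_ℂ • S (b' n) := by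
    conv_lhs => rw [← b'.sum_repr φ₁]
    rw [map_sum]
    refine Finset.sum_congr rfl fun n _ => ?_
    rw [ContinuousLinearMap.map_smulₛₗ, b'.repr_apply_apply, ← inner_conj_symm,
      Complex.conj_conj]
  rw [inner_sum, hφ, inner_sum]
  refine Finset.sum_congr rfl fun n _ => ?_
  rw [τ.inner_tmul, inner_smul_right]

/-- On a finite-dimensional Hilbert space `H` with antilinear involution
`S`, let `ξ_S = Σ_n e_n ⊗ S e_n` for an orthonormal basis `{e_n}` and let `P_S` act by
`P_S (v ⊗ w) = ⟨S v, w⟩ ξ_S`. Then `Cross_S(1) = P_S` and `Cross_S(P_S) = 1`; in particular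
`ξ_S` is independent of the chosen orthonormal basis. -/
theorem cross_of_identity_eq_PS
    [NormedAddCommGroup H] [InnerProductSpace ℂ H] [FiniteDimensional ℂ H]
    [NormedAddCommGroup K] [InnerProductSpace ℂ K] [CompleteSpace K]
    (τ : TensorSquare H K)
    (S Sstar : H →SL[starRingEnd ℂ] H)
    (hinv : ∀ x : H, S (S x) = x)
    (hadj : ∀ x y : H, ⟪Sstar y, x⟫_ℂ = ⟪S x, y⟫_ℂ)
    {ι : Type*} [Fintype ι] (b : OrthonormalBasis ι ℂ H)
    (P : K →L[ℂ] K)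
    (hP : ∀ v w : H, P (τ.tmul v w) = ⟪S v, w⟫_ℂ • ∑ n, τ.tmul (b n) (S (b n))) :
    CrossRelB τ S Sstar (1 : K →L[ℂ] K) P ∧
    CrossRelB τ S Sstar P (1 : K →L[ℂ] K) ∧
    (∀ {ι' : Type} [Fintype ι'] (b' : OrthonormalBasis ι' ℂ H),
      ∑ n, τ.tmul (b' n) (S (b' n)) = ∑ n, τ.tmul (b n) (S (b n))) := by
  refine ⟨?_, ?_, ?_⟩
  · intro φ₁ φ₂ ψ₁ ψ₂
    rw [hP, inner_smul_right, key_inner_xi τ S b, ContinuousLinearMap.one_apply,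
      τ.inner_tmul, hadj]
    ring
  · intro φ₁ φ₂ ψ₁ ψ₂
    rw [ContinuousLinearMap.one_apply, hP, inner_smul_right, key_inner_xi τ S b,
      hinv, τ.inner_tmul, hadj, hinv]
  · intro ι' _ b'
    set ξ := ∑ n, τ.tmul (b n) (S (b n))
    set ξ' := ∑ n, τ.tmul (b' n) (S (b' n))
    have horth : ∀ φ₁ φ₂ : H, ⟪τ.tmul φ₁ φ₂, ξ' - ξ⟫_ℂ = 0 := by
      intro φ₁ φ₂
      rw [inner_sub_right, key_inner_xi τ S b, key_inner_xi τ S b', sub_self]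
    have hz : ∀ x ∈ Submodule.span ℂ (Set.range fun p : H × H => τ.tmul p.1 p.2),
        ⟪x, ξ' - ξ⟫_ℂ = 0 := by
      intro x hx
      induction hx using Submodule.span_induction with
      | mem x hx => obtain ⟨p, rfl⟩ := hx; exact horth p.1 p.2
      | zero => simp
      | add x y _ _ hx hy => rw [inner_add_left, hx, hy, add_zero]
      | smul c x _ hx => rw [inner_smul_left, hx, mul_zero]
    have hclosed : IsClosed {x : K | ⟪x, ξ' - ξ⟫_ℂ = 0} :=
      isClosed_eq (continuous_id.inner continuous_const) continuous_const
    have hall : ∀ x : K, ⟪x, ξ' - ξ⟫_ℂ = 0 := by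
      intro x
      have hsub : (↑(Submodule.span ℂ (Set.range fun p : H × H => τ.tmul p.1 p.2)) : Set K)
          ⊆ {x : K | ⟪x, ξ' - ξ⟫_ℂ = 0} := fun y hy => hz y hy
      exact hclosed.closure_subset_iff.mpr hsub (τ.dense_span x)
    have : ξ' - ξ = 0 := by
      have := hall (ξ' - ξ); rwa [inner_self_eq_zero] at this
    exact sub_eq_zero.mp this
end
end

section
/- If dim H = ∞, then the identity operator on H⊗H is not S-crossable for any densely defined closed antilinear involution S; that is, there exists no bounded operator Cross_S(1) satisfying the crossing relation. -/
noncomputable section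
open scoped InnerProductSpace ComplexConjugate

variable {H K : Type*}

section AuxLemmas
variable [NormedAddCommGroup H] [InnerProductSpace ℂ H]
  [NormedAddCommGroup K] [InnerProductSpace ℂ K]

lemma aux_norm_le_of_dense {D : Set H} (hD : Dense D) {x : H} {M : ℝ} (hM : 0 ≤ M)
    (h : ∀ y ∈ D, ‖(⟪x, y⟫_ℂ)‖ ≤ M * ‖y‖) : ‖x‖ ≤ M := by
  have hcl : IsClosed {y : H | ‖(⟪x, y⟫_ℂ)‖ - M * ‖y‖ ≤ 0} :=
    isClosed_le (((continuous_const.inner continuous_id).norm).sub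
      (continuous_const.mul continuous_norm)) continuous_const
  have hsub : D ⊆ {y : H | ‖(⟪x, y⟫_ℂ)‖ - M * ‖y‖ ≤ 0} := fun y hy => by
    simpa [sub_nonpos] using h y hy
  have hx : x ∈ {y : H | ‖(⟪x, y⟫_ℂ)‖ - M * ‖y‖ ≤ 0} :=
    closure_minimal hsub hcl (hD x)
  have hx' : ‖x‖ ^ 2 ≤ M * ‖x‖ := by
    have h1 : ‖(⟪x, x⟫_ℂ)‖ ≤ M * ‖x‖ := by simpa [sub_nonpos] using hx
    calc ‖x‖ ^ 2 = ‖(⟪x, x⟫_ℂ)‖ := by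
          rw [inner_self_eq_norm_sq_to_K]; simp
      _ ≤ M * ‖x‖ := h1
  rcases eq_or_lt_of_le (norm_nonneg x) with h0 | h0
  · rw [← h0]; exact hM
  · nlinarith

lemma aux_exists_inner_ne_zero {D : Set H} (hD : Dense D) {x : H} (hx : x ≠ 0) :
    ∃ y ∈ D, ⟪x, y⟫_ℂ ≠ 0 := by
  by_contra hc
  push_neg at hc
  apply hx
  rw [← norm_eq_zero]
  refine le_antisymm ?_ (norm_nonneg x)
  exact aux_norm_le_of_dense hD le_rfl fun y hy => by simp [hc y hy]

lemma aux_exists_orthonormal_seq [CompleteSpace H] (hinf : ¬ FiniteDimensional ℂ H)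
    (D : Submodule ℂ H) (hD : Dense (D : Set H)) :
    ∃ e : ℕ → H, Orthonormal ℂ e ∧ ∀ n, e n ∈ D := by
  have hDfd : ¬ FiniteDimensional ℂ D := by
    intro hfd
    have hcl : IsClosed (D : Set H) := Submodule.closed_of_finiteDimensional D
    have htop : D = ⊤ := by
      rw [Submodule.eq_top_iff']
      intro x
      have := hD x
      rwa [hcl.closure_eq] at this
    subst htop
    exact hinf (Submodule.topEquiv.finiteDimensional)
  classical
  have hinfidx : Infinite (Module.Basis.ofVectorSpaceIndex ℂ D) := by
    by_contra hfin
    rw [not_infinite_iff_finite] at hfin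
    exact hDfd (Module.Basis.finiteDimensional_of_finite (Module.Basis.ofVectorSpace ℂ D))
  set b := Module.Basis.ofVectorSpace ℂ D
  let emb := Infinite.natEmbedding (Module.Basis.ofVectorSpaceIndex ℂ D)
  let f : ℕ → H := fun n => (b (emb n) : H)
  have hfD : ∀ n, f n ∈ D := fun n => (b (emb n)).2
  have hli : LinearIndependent ℂ f := by
    have h1 : LinearIndependent ℂ (fun n => b (emb n)) :=
      b.linearIndependent.comp emb emb.injective
    exact h1.map' D.subtype (Submodule.ker_subtype D)
  refine ⟨InnerProductSpace.gramSchmidtNormed ℂ f, InnerProductSpace.gramSchmidtNormed_orthonormal hli, fun n => ?_⟩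
  have hmem : InnerProductSpace.gramSchmidt ℂ f n ∈ D := by
    have h1 := InnerProductSpace.gramSchmidt_mem_span ℂ f (le_refl n)
    have h2 : Submodule.span ℂ (f '' Set.Iic n) ≤ D := by
      rw [Submodule.span_le]
      rintro x ⟨m, _, rfl⟩
      exact hfD m
    exact h2 h1
  exact D.smul_mem _ hmem

lemma aux_norm_tmul (τ : TensorSquare H K) (a b : H) : ‖τ.tmul a b‖ = ‖a‖ * ‖b‖ := by
  have h := τ.inner_tmul a b a b
  rw [inner_self_eq_norm_sq_to_K, inner_self_eq_norm_sq_to_K, inner_self_eq_norm_sq_to_K] at h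
  have h2 : ‖τ.tmul a b‖ ^ 2 = ‖a‖ ^ 2 * ‖b‖ ^ 2 := by exact_mod_cast h
  nlinarith [norm_nonneg (τ.tmul a b), norm_nonneg a, norm_nonneg b,
    mul_nonneg (norm_nonneg a) (norm_nonneg b)]

lemma aux_continuous_tmul (τ : TensorSquare H K) (a : H) :
    Continuous fun b => τ.tmul a b := by
  have hsub : ∀ b b' : H, τ.tmul a (b - b') = τ.tmul a b - τ.tmul a b' := by
    intro b b'
    have h := τ.tmul_add_right a b' (b - b')
    rw [add_sub_cancel] at h
    exact (eq_sub_of_add_eq' h.symm)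
  have hlip : LipschitzWith ‖a‖₊ (fun b => τ.tmul a b) := by
    apply LipschitzWith.of_dist_le_mul
    intro b b'
    rw [dist_eq_norm, dist_eq_norm, ← hsub, aux_norm_tmul]
    simp [coe_nnnorm]
  exact hlip.continuous

end AuxLemmas

/-- If `dim H = ∞`, the identity operator on `H ⊗ H` is not `S`-crossable
for any densely defined closed antilinear involution `S`: no bounded operator satisfies the
crossing relation with `T = 1`. -/
theorem identity_not_crossable_of_infinite_dimensional
    [NormedAddCommGroup H] [InnerProductSpace ℂ H] [CompleteSpace H]
    [SecondCountableTopology H]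
    [NormedAddCommGroup K] [InnerProductSpace ℂ K] [CompleteSpace K]
    (hinf : ¬ FiniteDimensional ℂ H)
    (τ : TensorSquare H K) (S : AntiInvolution H) :
    ¬ ∃ Tc : K →L[ℂ] K, CrossRelU τ S (1 : K →L[ℂ] K) Tc := by
  rintro ⟨Tc, hTc⟩
  have hnt : Nontrivial H := by
    by_contra hn
    rw [not_nontrivial_iff_subsingleton] at hn
    exact hinf inferInstance
  -- a nonzero element of dom S
  obtain ⟨x0, hx0⟩ := exists_ne (0 : H)
  obtain ⟨φ₁, hφ₁D, hφ₁i⟩ := aux_exists_inner_ne_zero S.dense_dom hx0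
  have hφ₁ne : φ₁ ≠ 0 := by
    intro h; apply hφ₁i; simp [h]
  have hS0 : S.toFun 0 = 0 := by
    have h := S.map_smul 0 φ₁ hφ₁D
    simpa using h
  have hSφ₁ : S.toFun φ₁ ≠ 0 := by
    intro h
    apply hφ₁ne
    rw [← S.invol φ₁ hφ₁D, h, hS0]
  obtain ⟨φ₂, hφ₂D, hc⟩ := aux_exists_inner_ne_zero S.dense_adjDom hSφ₁
  set c : ℂ := ⟪ S.toFun φ₁, φ₂ ⟫_ℂ with hcdef
  -- key form of the crossing relation
  have key : ∀ a ∈ S.dom, ∀ b ∈ S.adjDom, ∀ ψ₁ ∈ S.dom, ∀ ψ₂ ∈ S.adjDom,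
      ⟪τ.tmul a b, Tc (τ.tmul ψ₁ ψ₂)⟫_ℂ
        = ⟪b, S.toFun a⟫_ℂ * ⟪S.toFun ψ₁, ψ₂⟫_ℂ := by
    intro a ha ψ₁ h1 b hb ψ₂ h2
    rw [hTc a ha b hb ψ₁ h1 ψ₂ h2, ContinuousLinearMap.one_apply, τ.inner_tmul,
      S.adj_spec ψ₂ h2 b hb]
  have hnorm := aux_norm_tmul τ
  -- Step 1: S is bounded on its domain
  set C : ℝ := ‖Tc‖ * ‖φ₁‖ * ‖φ₂‖ / ‖c‖ + 1 with hCdef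
  have hC1 : (1:ℝ) ≤ C := by
    have h : (0:ℝ) ≤ ‖Tc‖ * ‖φ₁‖ * ‖φ₂‖ / ‖c‖ := by positivity
    rw [hCdef]
    linarith
  have hC0 : (0:ℝ) < C := lt_of_lt_of_le one_pos hC1
  have hcpos : (0:ℝ) < ‖c‖ := norm_pos_iff.mpr hc
  have hSbound : ∀ ψ ∈ S.dom, ‖S.toFun ψ‖ ≤ C * ‖ψ‖ := by
    intro ψ hψ
    apply aux_norm_le_of_dense S.dense_adjDom (by positivity)
    intro y hy
    have hk := key φ₁ hφ₁D φ₂ hφ₂D ψ hψ y hy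
    have hb : ‖⟪τ.tmul φ₁ φ₂, Tc (τ.tmul ψ y)⟫_ℂ‖ ≤ ‖φ₁‖ * ‖φ₂‖ * (‖Tc‖ * (‖ψ‖ * ‖y‖)) := by
      calc ‖⟪τ.tmul φ₁ φ₂, Tc (τ.tmul ψ y)⟫_ℂ‖
          ≤ ‖τ.tmul φ₁ φ₂‖ * ‖Tc (τ.tmul ψ y)‖ := norm_inner_le_norm _ _
        _ ≤ ‖τ.tmul φ₁ φ₂‖ * (‖Tc‖ * ‖τ.tmul ψ y‖) := by
            gcongr; exact Tc.le_opNorm _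
        _ = ‖φ₁‖ * ‖φ₂‖ * (‖Tc‖ * (‖ψ‖ * ‖y‖)) := by rw [hnorm, hnorm]
    rw [hk, norm_mul] at hb
    have hccc : ‖⟪φ₂, S.toFun φ₁⟫_ℂ‖ = ‖c‖ := by
      rw [hcdef, ← inner_conj_symm]
      exact RCLike.norm_conj _
    rw [hccc] at hb
    have h1 : ‖⟪S.toFun ψ, y⟫_ℂ‖ ≤ ‖Tc‖ * ‖φ₁‖ * ‖φ₂‖ / ‖c‖ * (‖ψ‖ * ‖y‖) := by
      rw [div_mul_eq_mul_div, le_div_iff₀ hcpos]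
      calc ‖⟪S.toFun ψ, y⟫_ℂ‖ * ‖c‖ = ‖c‖ * ‖⟪S.toFun ψ, y⟫_ℂ‖ := by ring
        _ ≤ ‖φ₁‖ * ‖φ₂‖ * (‖Tc‖ * (‖ψ‖ * ‖y‖)) := hb
        _ = ‖Tc‖ * ‖φ₁‖ * ‖φ₂‖ * (‖ψ‖ * ‖y‖) := by ring
    calc ‖⟪S.toFun ψ, y⟫_ℂ‖ ≤ ‖Tc‖ * ‖φ₁‖ * ‖φ₂‖ / ‖c‖ * (‖ψ‖ * ‖y‖) := h1
      _ ≤ C * (‖ψ‖ * ‖y‖) := by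
          apply mul_le_mul_of_nonneg_right _ (by positivity)
          rw [hCdef]; linarith
      _ = C * ‖ψ‖ * ‖y‖ := by ring
  have hSlow : ∀ ψ ∈ S.dom, ‖ψ‖ ≤ C * ‖S.toFun ψ‖ := by
    intro ψ hψ
    have h := hSbound (S.toFun ψ) (S.invol_mem ψ hψ)
    rwa [S.invol ψ hψ] at h
  -- Step 2: the vector `v` implementing φ₁ ⊗ φ₂ ↦ ⟪φ₂, Sφ₁⟫
  set v : K := c⁻¹ • Tc (τ.tmul φ₁ φ₂) with hvdef
  have hvA : ∀ a ∈ S.dom, ∀ b : H, ⟪τ.tmul a b, v⟫_ℂ = ⟪b, S.toFun a⟫_ℂ := by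
    intro a ha
    have heq : Set.EqOn (fun b => ⟪τ.tmul a b, v⟫_ℂ)
        (fun b => ⟪b, S.toFun a⟫_ℂ) (S.adjDom : Set H) := by
      intro b hb
      simp only
      rw [hvdef, inner_smul_right, key a ha b hb φ₁ hφ₁D φ₂ hφ₂D, ← hcdef]
      field_simp
    have h1 : Continuous fun b => ⟪τ.tmul a b, v⟫_ℂ :=
      Continuous.inner (aux_continuous_tmul τ a) continuous_const
    have h2 : Continuous fun b : H => ⟪b, S.toFun a⟫_ℂ :=
      Continuous.inner continuous_id continuous_const
    intro b
    exact congrFun (Continuous.ext_on S.dense_adjDom h1 h2 heq) b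
  -- Step 3: orthonormal sequence in dom S and contradiction
  obtain ⟨e, he, heD⟩ := aux_exists_orthonormal_seq hinf S.dom S.dense_dom
  have henorm : ∀ k, ‖e k‖ = 1 := he.1
  set g : ℕ → K := fun k => τ.tmul (e k) (S.toFun (e k)) with hgdef
  have main : ∀ n : ℕ, ∑ k ∈ Finset.range n, ‖S.toFun (e k)‖ ^ 2 ≤ ‖v‖ ^ 2 ∨ n = 0 := by
    intro n
    rcases Nat.eq_zero_or_pos n with h0 | hpos
    · exact Or.inr h0
    left
    set u : K := ∑ k ∈ Finset.range n, g k with hudef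
    set sn : ℝ := ∑ k ∈ Finset.range n, ‖S.toFun (e k)‖ ^ 2 with hsndef
    have hsn_nonneg : 0 ≤ sn := Finset.sum_nonneg fun k _ => sq_nonneg _
    have huv : ⟪u, v⟫_ℂ = (sn : ℂ) := by
      rw [hudef, sum_inner, hsndef]
      push_cast
      refine Finset.sum_congr rfl fun k _ => ?_
      rw [hgdef]
      simp only
      rw [hvA (e k) (heD k) (S.toFun (e k)), inner_self_eq_norm_sq_to_K]
      norm_cast
    have huu : ⟪u, u⟫_ℂ = (sn : ℂ) := by
      rw [hudef, sum_inner, hsndef]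
      push_cast
      refine Finset.sum_congr rfl fun j hj => ?_
      rw [inner_sum]
      rw [Finset.sum_eq_single j]
      · rw [hgdef]
        simp only
        rw [τ.inner_tmul]
        have hjj : ⟪e j, e j⟫_ℂ = 1 := by simpa using orthonormal_iff_ite.mp he j j
        rw [hjj, one_mul, inner_self_eq_norm_sq_to_K]
        norm_cast
      · intro k _ hkj
        rw [hgdef]
        simp only
        rw [τ.inner_tmul]
        have := orthonormal_iff_ite.mp he j k
        rw [if_neg (by exact fun h => hkj (h.symm))] at this
        rw [this, zero_mul]
      · intro hj'
        exact absurd hj hj'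
    have hnu : ‖u‖ ^ 2 = sn := by
      have h := huu
      rw [inner_self_eq_norm_sq_to_K] at h
      simpa [← Complex.ofReal_pow] using congrArg Complex.re h
    have hcs : sn ≤ ‖u‖ * ‖v‖ := by
      have h := norm_inner_le_norm (𝕜 := ℂ) u v
      rwa [huv, Complex.norm_real, Real.norm_eq_abs, abs_of_nonneg hsn_nonneg] at h
    have hsq : sn ^ 2 ≤ sn * ‖v‖ ^ 2 := by
      nlinarith [norm_nonneg u, norm_nonneg v]
    rcases eq_or_lt_of_le hsn_nonneg with hz | hz
    · rw [← hz]; positivity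
    · nlinarith
  -- lower bound on each term
  have hterm : ∀ k, 1 / C ^ 2 ≤ ‖S.toFun (e k)‖ ^ 2 := by
    intro k
    have h := hSlow (e k) (heD k)
    rw [henorm k] at h
    rw [div_le_iff₀ (by positivity)]
    nlinarith [norm_nonneg (S.toFun (e k))]
  obtain ⟨n, hn⟩ := exists_nat_gt (C ^ 2 * ‖v‖ ^ 2 + 1)
  have hlow : (n : ℝ) * (1 / C ^ 2) ≤ ∑ k ∈ Finset.range n, ‖S.toFun (e k)‖ ^ 2 := by
    calc (n : ℝ) * (1 / C ^ 2) = ∑ _k ∈ Finset.range n, (1 / C ^ 2) := by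
          rw [Finset.sum_const, Finset.card_range, nsmul_eq_mul]
      _ ≤ ∑ k ∈ Finset.range n, ‖S.toFun (e k)‖ ^ 2 :=
          Finset.sum_le_sum fun k _ => hterm k
  have hn0 : n ≠ 0 := by
    intro h
    rw [h] at hn
    simp only [Nat.cast_zero] at hn
    nlinarith [sq_nonneg (C * ‖v‖)]
  rcases main n with hmain | hmain
  · have hCn : (n : ℝ) > C ^ 2 * ‖v‖ ^ 2 + 1 := hn
    have : (n : ℝ) * (1 / C ^ 2) ≤ ‖v‖ ^ 2 := le_trans hlow hmain
    rw [mul_one_div, div_le_iff₀ (by positivity)] at this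
    nlinarith
  · exact hn0 hmain
end
end

section
/- The set C_S of S-crossable operators in B(H⊗H) is a complex linear subspace, and the crossing map Cross_S : C_S → B(H⊗H) is an injective complex linear map. -/
noncomputable section
open scoped InnerProductSpace ComplexConjugate

variable {H K : Type*}

section Aux

variable [NormedAddCommGroup H] [InnerProductSpace ℂ H]
  [NormedAddCommGroup K] [InnerProductSpace ℂ K]

namespace TensorSquare

theorem norm_tmul (τ : TensorSquare H K) (a b : H) : ‖τ.tmul a b‖ = ‖a‖ * ‖b‖ := by
  have h2 : ‖τ.tmul a b‖ ^ 2 = (‖a‖ * ‖b‖) ^ 2 := by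
    have h := τ.inner_tmul a b a b
    rw [inner_self_eq_norm_sq_to_K, inner_self_eq_norm_sq_to_K,
      inner_self_eq_norm_sq_to_K] at h
    rw [mul_pow]
    exact_mod_cast h
  nlinarith [norm_nonneg (τ.tmul a b), mul_nonneg (norm_nonneg a) (norm_nonneg b)]

/-- `tmul` as a continuous bilinear map. -/
def tmulL (τ : TensorSquare H K) : H →L[ℂ] H →L[ℂ] K :=
  LinearMap.mkContinuous₂
    (LinearMap.mk₂ ℂ τ.tmul τ.tmul_add_left (fun c a b => τ.tmul_smul_left c a b)
      τ.tmul_add_right (fun c a b => τ.tmul_smul_right c a b)) 1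
    (fun a b => by rw [one_mul]; exact (τ.norm_tmul a b).le)

@[simp] theorem tmulL_apply (τ : TensorSquare H K) (a b : H) : τ.tmulL a b = τ.tmul a b := rfl

theorem continuous_tmul (τ : TensorSquare H K) :
    Continuous fun p : H × H => τ.tmul p.1 p.2 :=
  τ.tmulL.continuous₂

/-- The key "vanishing" lemma: if all matrix elements of `A` between elementary tensors with
entries from four dense sets vanish, then `A = 0`. -/
theorem eq_zero_of_inner_tmul (τ : TensorSquare H K) (A : K →L[ℂ] K)
    {s₁ s₂ s₃ s₄ : Set H} (h₁ : Dense s₁) (h₂ : Dense s₂) (h₃ : Dense s₃) (h₄ : Dense s₄)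
    (h : ∀ a ∈ s₁, ∀ b ∈ s₂, ∀ c ∈ s₃, ∀ d ∈ s₄,
      ⟪τ.tmul a b, A (τ.tmul c d)⟫_ℂ = 0) : A = 0 := by
  -- Step 1: extend to all of H by continuity.
  have key : ∀ a b c d : H, ⟪τ.tmul a b, A (τ.tmul c d)⟫_ℂ = 0 := by
    set f : (H × H) × H × H → ℂ :=
      fun p => ⟪τ.tmul p.1.1 p.1.2, A (τ.tmul p.2.1 p.2.2)⟫_ℂ with hf
    have hfc : Continuous f := by
      apply Continuous.inner
      · exact τ.continuous_tmul.comp (continuous_fst.prodMk continuous_snd |>.comp continuous_fst)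
      · exact A.continuous.comp (τ.continuous_tmul.comp
          (continuous_fst.prodMk continuous_snd |>.comp continuous_snd))
    have hdense : Dense ((s₁ ×ˢ s₂) ×ˢ (s₃ ×ˢ s₄) : Set ((H × H) × H × H)) :=
      (h₁.prod h₂).prod (h₃.prod h₄)
    have : f = fun _ => (0 : ℂ) := by
      apply hfc.ext_on hdense continuous_const
      rintro ⟨⟨a, b⟩, c, d⟩ ⟨⟨ha, hb⟩, hc, hd⟩
      exact h a ha b hb c hc d hd
    intro a b c d
    exact congrFun this ((a, b), (c, d))
  -- Step 2: extend to spans.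
  have key2 : ∀ x ∈ Submodule.span ℂ (Set.range fun p : H × H => τ.tmul p.1 p.2),
      ∀ y ∈ Submodule.span ℂ (Set.range fun p : H × H => τ.tmul p.1 p.2),
      ⟪x, A y⟫_ℂ = 0 := by
    intro x hx y hy
    induction hx using Submodule.span_induction with
    | mem z hz =>
      obtain ⟨p, rfl⟩ := hz
      induction hy using Submodule.span_induction with
      | mem w hw =>
        obtain ⟨q, rfl⟩ := hw
        exact key p.1 p.2 q.1 q.2
      | zero => simp
      | add u v _ _ hu hv => simp [inner_add_right, map_add, hu, hv]
      | smul c u _ hu => simp [inner_smul_right, hu]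
    | zero => simp
    | add u v _ _ hu hv => simp [inner_add_left, hu, hv]
    | smul c u _ hu => simp [inner_smul_left, hu]
  -- Step 3: conclude.
  have key3 : ∀ y ∈ Submodule.span ℂ (Set.range fun p : H × H => τ.tmul p.1 p.2),
      A y = 0 := by
    intro y hy
    exact τ.dense_span.eq_zero_of_inner_right ℂ fun v hv => key2 v hv y hy
  ext y
  have : Set.EqOn (⇑A) (⇑(0 : K →L[ℂ] K))
      (Submodule.span ℂ (Set.range fun p : H × H => τ.tmul p.1 p.2) : Set K) :=
    fun z hz => by simpa using key3 z hz
  exact congrFun (A.continuous.ext_on τ.dense_span (map_continuous 0) this) y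

end TensorSquare

namespace AntiInvolution

variable [CompleteSpace H]

theorem adjFun_mem (S : AntiInvolution H) {y : H} (hy : y ∈ S.adjDom) :
    S.adjFun y ∈ S.adjDom := by
  apply S.adj_max _ y
  intro x hx
  have h1 : ⟪S.adjFun y, S.toFun x⟫_ℂ = ⟪S.toFun (S.toFun x), y⟫_ℂ :=
    S.adj_spec y hy _ (S.invol_mem x hx)
  rw [S.invol x hx] at h1
  calc ⟪y, x⟫_ℂ = conj ⟪x, y⟫_ℂ := (inner_conj_symm _ _).symm
    _ = conj ⟪S.adjFun y, S.toFun x⟫_ℂ := by rw [h1]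
    _ = ⟪S.toFun x, S.adjFun y⟫_ℂ := inner_conj_symm _ _

theorem adjFun_invol (S : AntiInvolution H) {y : H} (hy : y ∈ S.adjDom) :
    S.adjFun (S.adjFun y) = y := by
  apply S.dense_dom.eq_of_inner_left ℂ
  intro x hx
  have h1 : ⟪S.adjFun (S.adjFun y), x⟫_ℂ = ⟪S.toFun x, S.adjFun y⟫_ℂ :=
    S.adj_spec _ (S.adjFun_mem hy) x hx
  have h2 : ⟪S.adjFun y, S.toFun x⟫_ℂ = ⟪S.toFun (S.toFun x), y⟫_ℂ :=
    S.adj_spec y hy _ (S.invol_mem x hx)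
  rw [S.invol x hx] at h2
  rw [h1, ← inner_conj_symm, h2, inner_conj_symm]

end AntiInvolution

end Aux

/-- The set `C_S` of `S`-crossable operators is a complex linear subspace of
`B(H ⊗ H)`, and the crossing map `Cross_S : C_S → B(H ⊗ H)` is a well-defined, injective,
complex linear map (stated here in terms of the crossing relation `CrossRelU`). -/
theorem crossable_subspace_and_crossing_injective_linear
    [NormedAddCommGroup H] [InnerProductSpace ℂ H] [CompleteSpace H]
    [NormedAddCommGroup K] [InnerProductSpace ℂ K] [CompleteSpace K]
    (τ : TensorSquare H K) (S : AntiInvolution H) :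
    -- C_S is a complex linear subspace
    (∃ p : Submodule ℂ (K →L[ℂ] K),
      (p : Set (K →L[ℂ] K)) = {T | ∃ Tc : K →L[ℂ] K, CrossRelU τ S T Tc}) ∧
    -- Cross_S is well defined
    (∀ T Tc Tc' : K →L[ℂ] K, CrossRelU τ S T Tc → CrossRelU τ S T Tc' → Tc = Tc') ∧
    -- Cross_S is additive
    (∀ T₁ T₂ C₁ C₂ : K →L[ℂ] K, CrossRelU τ S T₁ C₁ → CrossRelU τ S T₂ C₂ →
      CrossRelU τ S (T₁ + T₂) (C₁ + C₂)) ∧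
    -- Cross_S is complex homogeneous
    (∀ (c : ℂ) (T C : K →L[ℂ] K), CrossRelU τ S T C → CrossRelU τ S (c • T) (c • C)) ∧
    -- Cross_S is injective
    (∀ T₁ T₂ C : K →L[ℂ] K, CrossRelU τ S T₁ C → CrossRelU τ S T₂ C → T₁ = T₂) := by
  -- Additivity
  have hadd : ∀ T₁ T₂ C₁ C₂ : K →L[ℂ] K, CrossRelU τ S T₁ C₁ → CrossRelU τ S T₂ C₂ →
      CrossRelU τ S (T₁ + T₂) (C₁ + C₂) := by
    intro T₁ T₂ C₁ C₂ h1 h2 φ₁ hφ₁ ψ₁ hψ₁ φ₂ hφ₂ ψ₂ hψ₂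
    simp only [ContinuousLinearMap.add_apply, inner_add_right]
    rw [h1 φ₁ hφ₁ ψ₁ hψ₁ φ₂ hφ₂ ψ₂ hψ₂, h2 φ₁ hφ₁ ψ₁ hψ₁ φ₂ hφ₂ ψ₂ hψ₂]
  -- Homogeneity
  have hsmul : ∀ (c : ℂ) (T C : K →L[ℂ] K), CrossRelU τ S T C →
      CrossRelU τ S (c • T) (c • C) := by
    intro c T C h φ₁ hφ₁ ψ₁ hψ₁ φ₂ hφ₂ ψ₂ hψ₂
    simp only [ContinuousLinearMap.smul_apply, inner_smul_right]
    rw [h φ₁ hφ₁ ψ₁ hψ₁ φ₂ hφ₂ ψ₂ hψ₂]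
  -- Well-definedness
  have huniq : ∀ T Tc Tc' : K →L[ℂ] K, CrossRelU τ S T Tc → CrossRelU τ S T Tc' → Tc = Tc' := by
    intro T Tc Tc' h h'
    have : Tc - Tc' = 0 := by
      apply τ.eq_zero_of_inner_tmul (Tc - Tc') S.dense_dom S.dense_adjDom S.dense_dom
        S.dense_adjDom
      intro a ha b hb c hc d hd
      simp only [ContinuousLinearMap.sub_apply, inner_sub_right]
      rw [h a ha c hc b hb d hd, h' a ha c hc b hb d hd, sub_self]
    exact sub_eq_zero.1 this
  -- Injectivity
  have hinj : ∀ T₁ T₂ C : K →L[ℂ] K, CrossRelU τ S T₁ C → CrossRelU τ S T₂ C → T₁ = T₂ := by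
    intro T₁ T₂ C h1 h2
    have hs₂ : Dense (S.adjFun '' (S.adjDom : Set H)) := by
      apply S.dense_adjDom.mono
      intro y hy
      exact ⟨S.adjFun y, S.adjFun_mem hy, S.adjFun_invol hy⟩
    have hs₃ : Dense (S.toFun '' (S.dom : Set H)) := by
      apply S.dense_dom.mono
      intro x hx
      exact ⟨S.toFun x, S.invol_mem x hx, S.invol x hx⟩
    have : T₁ - T₂ = 0 := by
      apply τ.eq_zero_of_inner_tmul (T₁ - T₂) S.dense_adjDom hs₂ hs₃ S.dense_dom
      rintro a ha b ⟨ψ₂, hψ₂, rfl⟩ c ⟨φ₁, hφ₁, rfl⟩ d hd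
      simp only [ContinuousLinearMap.sub_apply, inner_sub_right]
      rw [← h1 φ₁ hφ₁ d hd a ha ψ₂ hψ₂, ← h2 φ₁ hφ₁ d hd a ha ψ₂ hψ₂, sub_self]
    exact sub_eq_zero.1 this
  refine ⟨?_, huniq, hadd, hsmul, hinj⟩
  refine ⟨{
    carrier := {T | ∃ Tc : K →L[ℂ] K, CrossRelU τ S T Tc}
    add_mem' := ?_
    zero_mem' := ?_
    smul_mem' := ?_ }, rfl⟩
  · rintro T₁ T₂ ⟨C₁, h1⟩ ⟨C₂, h2⟩
    exact ⟨C₁ + C₂, hadd T₁ T₂ C₁ C₂ h1 h2⟩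
  · refine ⟨0, ?_⟩
    intro φ₁ _ ψ₁ _ φ₂ _ ψ₂ _
    simp
  · rintro c T ⟨C, h⟩
    exact ⟨c • C, hsmul c T C h⟩
end
end

section
/- If S₁ and S₂ are two bounded antilinear involutions on H, then an operator T ∈ B(H⊗H) is S₁-crossable if and only if it is S₂-crossable, and in that case Cross_{S₁}(T) = (S₁*S₂* ⊗ 1) Cross_{S₂}(T) (1 ⊗ S₂*S₁*). -/
noncomputable section
open scoped InnerProductSpace ComplexConjugate

variable {H K : Type*}

section Aux
variable [NormedAddCommGroup H] [InnerProductSpace ℂ H]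
  [NormedAddCommGroup K] [InnerProductSpace ℂ K]

lemma tensor_ext_aux (τ : TensorSquare H K) (f g : K →L[ℂ] ℂ)
    (h : ∀ v w : H, f (τ.tmul v w) = g (τ.tmul v w)) : ∀ x : K, f x = g x := by
  have heq : Set.EqOn f g
      ((Submodule.span ℂ (Set.range fun p : H × H => τ.tmul p.1 p.2)) : Set K) := by
    intro y hy
    induction hy using Submodule.span_induction with
    | mem z hz => obtain ⟨⟨v, w⟩, rfl⟩ := hz; exact h v w
    | zero => simp
    | add a b _ _ ha hb => simp [map_add, ha, hb]
    | smul c a _ ha => simp [map_smul, ha]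
  have := Continuous.ext_on τ.dense_span f.continuous g.continuous heq
  exact fun x => congrFun this x

lemma adj_invol_aux (S Ss : H →SL[starRingEnd ℂ] H)
    (hinv : ∀ x : H, S (S x) = x)
    (hadj : ∀ x y : H, ⟪Ss y, x⟫_ℂ = ⟪S x, y⟫_ℂ) : ∀ y : H, Ss (Ss y) = y := by
  intro y
  apply ext_inner_right ℂ
  intro x
  rw [hadj, ← inner_conj_symm, hadj, hinv, inner_conj_symm]

lemma cross_transfer_aux (τ : TensorSquare H K)
    (S₁ S₁s S₂ S₂s : H →SL[starRingEnd ℂ] H)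
    (hinv₂ : ∀ x : H, S₂ (S₂ x) = x)
    (hadj₁ : ∀ x y : H, ⟪S₁s y, x⟫_ℂ = ⟪S₁ x, y⟫_ℂ)
    (hadj₂ : ∀ x y : H, ⟪S₂s y, x⟫_ℂ = ⟪S₂ x, y⟫_ℂ)
    (L R : K →L[ℂ] K)
    (hL : ∀ v w : H, L (τ.tmul v w) = τ.tmul (S₁s (S₂s v)) w)
    (hR : ∀ v w : H, R (τ.tmul v w) = τ.tmul v (S₂s (S₁s w)))
    (T : K →L[ℂ] K) (Tc₂ : K →L[ℂ] K) (hTc₂ : CrossRelB τ S₂ S₂s T Tc₂) :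
    CrossRelB τ S₁ S₁s T (L.comp (Tc₂.comp R)) := by
  have hSs₂ : ∀ y : H, S₂s (S₂s y) = y := adj_invol_aux S₂ S₂s hinv₂ hadj₂
  intro φ₁ φ₂ ψ₁ ψ₂
  have hLmove : ∀ x : K,
      ⟪τ.tmul φ₁ φ₂, L x⟫_ℂ = ⟪τ.tmul (S₂ (S₁ φ₁)) φ₂, x⟫_ℂ := by
    apply tensor_ext_aux τ ((innerSL ℂ (τ.tmul φ₁ φ₂)).comp L)
      (innerSL ℂ (τ.tmul (S₂ (S₁ φ₁)) φ₂))
    intro v w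
    simp only [ContinuousLinearMap.comp_apply, innerSL_apply_apply, hL, τ.inner_tmul]
    congr 1
    rw [← inner_conj_symm, hadj₁, inner_conj_symm, hadj₂]
  simp only [ContinuousLinearMap.comp_apply, hR, hLmove]
  rw [hTc₂ (S₂ (S₁ φ₁)) φ₂ ψ₁ (S₂s (S₁s ψ₂)), hSs₂, hinv₂]

end Aux

/-- For two bounded antilinear involutions `S₁, S₂` on `H`, an operator
`T` is `S₁`-crossable iff it is `S₂`-crossable, and in that case
`Cross_{S₁}(T) = (S₁* S₂* ⊗ 1) Cross_{S₂}(T) (1 ⊗ S₂* S₁*)`.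
The operators `L = S₁*S₂* ⊗ 1`, `R = 1 ⊗ S₂*S₁*` (and `L', R'` with the roles of `S₁, S₂`
exchanged) are realized on the tensor square by their actions on simple tensors. -/
theorem crossable_independent_of_bounded_involution
    [NormedAddCommGroup H] [InnerProductSpace ℂ H] [CompleteSpace H]
    [NormedAddCommGroup K] [InnerProductSpace ℂ K] [CompleteSpace K]
    (τ : TensorSquare H K)
    (S₁ S₁s S₂ S₂s : H →SL[starRingEnd ℂ] H)
    (hinv₁ : ∀ x : H, S₁ (S₁ x) = x) (hinv₂ : ∀ x : H, S₂ (S₂ x) = x)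
    (hadj₁ : ∀ x y : H, ⟪S₁s y, x⟫_ℂ = ⟪S₁ x, y⟫_ℂ)
    (hadj₂ : ∀ x y : H, ⟪S₂s y, x⟫_ℂ = ⟪S₂ x, y⟫_ℂ)
    (L R L' R' : K →L[ℂ] K)
    (hL : ∀ v w : H, L (τ.tmul v w) = τ.tmul (S₁s (S₂s v)) w)
    (hR : ∀ v w : H, R (τ.tmul v w) = τ.tmul v (S₂s (S₁s w)))
    (hL' : ∀ v w : H, L' (τ.tmul v w) = τ.tmul (S₂s (S₁s v)) w)
    (hR' : ∀ v w : H, R' (τ.tmul v w) = τ.tmul v (S₁s (S₂s w)))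
    (T : K →L[ℂ] K) :
    ((∃ Tc, CrossRelB τ S₁ S₁s T Tc) ↔ (∃ Tc, CrossRelB τ S₂ S₂s T Tc)) ∧
    (∀ Tc₂ : K →L[ℂ] K, CrossRelB τ S₂ S₂s T Tc₂ →
      CrossRelB τ S₁ S₁s T (L.comp (Tc₂.comp R))) := by
  constructor
  · constructor
    · rintro ⟨Tc₁, hTc₁⟩
      exact ⟨L'.comp (Tc₁.comp R'),
        cross_transfer_aux τ S₂ S₂s S₁ S₁s hinv₁ hadj₂ hadj₁ L' R' hL' hR' T Tc₁ hTc₁⟩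
    · rintro ⟨Tc₂, hTc₂⟩
      exact ⟨L.comp (Tc₂.comp R),
        cross_transfer_aux τ S₁ S₁s S₂ S₂s hinv₂ hadj₁ hadj₂ L R hL hR T Tc₂ hTc₂⟩
  · exact fun Tc₂ hTc₂ =>
      cross_transfer_aux τ S₁ S₁s S₂ S₂s hinv₂ hadj₁ hadj₂ L R hL hR T Tc₂ hTc₂
end
end

section
/- Let S be a bounded antilinear involution on an infinite-dimensional Hilbert space H. Then inf over S-crossable operators T of ‖T − 1‖ equals 1. In particular the S-crossable operators are not norm dense in B(H⊗H). -/
noncomputable section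
open scoped InnerProductSpace ComplexConjugate

variable {H K : Type*}

namespace CrossHelper


/-- Triangular bump: `1` on `[l-ε/2, l+ε/2]`, `0` outside `(l-ε, l+ε)`. -/
def tri (l ε t : ℝ) : ℝ := max 0 (min 1 (2 - (2/ε) * |t - l|))

lemma tri_cont (l ε : ℝ) : Continuous (tri l ε) := by
  unfold tri
  exact continuous_const.max (continuous_const.min (continuous_const.sub
    (continuous_const.mul ((continuous_id.sub continuous_const).abs))))

lemma tri_nonneg (l ε t : ℝ) : 0 ≤ tri l ε t := le_max_left _ _

lemma tri_le_one (l ε t : ℝ) : tri l ε t ≤ 1 :=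
  max_le zero_le_one (min_le_left _ _)

lemma tri_eq_one {l ε t : ℝ} (hε : 0 < ε) (h : |t - l| ≤ ε / 2) : tri l ε t = 1 := by
  have h1 : (2/ε) * |t - l| ≤ 1 := by
    rw [div_mul_eq_mul_div, div_le_one hε]; nlinarith
  have : min 1 (2 - (2/ε) * |t - l|) = 1 := min_eq_left (by linarith)
  rw [tri, this]; exact max_eq_right zero_le_one

lemma tri_eq_zero {l ε t : ℝ} (hε : 0 < ε) (h : ε ≤ |t - l|) : tri l ε t = 0 := by
  have h1 : 2 ≤ (2/ε) * |t - l| := by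
    rw [div_mul_eq_mul_div, le_div_iff₀ hε]; nlinarith
  have : min 1 (2 - (2/ε) * |t - l|) ≤ 0 := le_trans (min_le_right _ _) (by linarith)
  exact max_eq_left this

lemma tri_absorb {l ε : ℝ} (hε : 0 < ε) (t : ℝ) :
    tri l ε t * tri l (ε/2) t = tri l (ε/2) t := by
  by_cases h : |t - l| ≤ ε / 2
  · rw [tri_eq_one hε h, one_mul]
  · rw [tri_eq_zero (by positivity) (le_of_lt (not_le.mp h)), mul_zero]

lemma tri_mul_id_bound {l ε : ℝ} (hε : 0 < ε) (t : ℝ) : |(t - l) * tri l ε t| ≤ ε := by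
  by_cases h : |t - l| ≤ ε
  · rw [abs_mul]
    calc |t - l| * |tri l ε t| ≤ ε * 1 := by
          refine mul_le_mul h ?_ (abs_nonneg _) hε.le
          rw [abs_of_nonneg (tri_nonneg _ _ _)]; exact tri_le_one _ _ _
      _ = ε := mul_one _
  · rw [tri_eq_zero hε (not_le.mp h).le, mul_zero, abs_zero]; exact hε.le


section H1
variable {H : Type*} [NormedAddCommGroup H] [InnerProductSpace ℂ H]


lemma exists_unit_orthogonal (V : Submodule ℂ H) (hV : ¬ FiniteDimensional ℂ V)
    {M : ℕ} (f : Fin M → H) :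
    ∃ x : H, x ∈ V ∧ ‖x‖ = 1 ∧ ∀ i, ⟪f i, x⟫_ℂ = 0 := by
  classical
  let φ : V →ₗ[ℂ] (Fin M → ℂ) :=
    { toFun := fun v i => ⟪f i, (v : H)⟫_ℂ
      map_add' := fun a b => by ext i; simp [inner_add_right]
      map_smul' := fun c a => by ext i; simp [inner_smul_right] }
  have hni : ¬ Function.Injective φ := fun h => hV (FiniteDimensional.of_injective φ h)
  rw [Function.not_injective_iff] at hni
  obtain ⟨a, b, hab, hne⟩ := hni
  have hc : a - b ≠ 0 := sub_ne_zero.mpr hne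
  have hφ : ∀ i, ⟪f i, ((a - b : V) : H)⟫_ℂ = 0 := by
    intro i
    have : φ (a - b) = 0 := by rw [map_sub, hab, sub_self]
    exact congrFun this i
  set v : H := ((a - b : V) : H) with hv
  have hv0 : v ≠ 0 := fun h => hc (by exact_mod_cast Subtype.ext h)
  have hnv : (0:ℝ) < ‖v‖ := norm_pos_iff.mpr hv0
  refine ⟨(‖v‖ : ℂ)⁻¹ • v, ?_, ?_, ?_⟩
  · exact Submodule.smul_mem V _ (a - b).2
  · rw [norm_smul]
    simp [norm_inv, hnv.ne']
  · intro i; rw [inner_smul_right, hφ i, mul_zero]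


lemma inner_self_c {E : Type*} [NormedAddCommGroup E] [InnerProductSpace ℂ E] (x : E) :
    ⟪x, x⟫_ℂ = ((‖x‖ : ℝ) : ℂ)^2 := inner_self_eq_norm_sq_to_K x



lemma norm_eq_of_inner_self {x : H} {r : ℝ} (hr : 0 ≤ r) (h : ⟪x, x⟫_ℂ = (r:ℂ)^2) :
    ‖x‖ = r := by
  have h2 : ‖x‖^2 = r^2 := by
    have h1 := inner_self_eq_norm_sq (𝕜 := ℂ) x
    rw [h] at h1
    rw [← h1]
    have : ((r:ℂ))^2 = ((r^2 : ℝ) : ℂ) := by push_cast; ring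
    rw [this]; exact RCLike.ofReal_re _
  calc ‖x‖ = Real.sqrt (‖x‖^2) := (Real.sqrt_sq (norm_nonneg x)).symm
    _ = Real.sqrt (r^2) := by rw [h2]
    _ = r := Real.sqrt_sq hr


lemma exists_on_family (A : H →L[ℂ] H) (l ε : ℝ)
    (h : ∀ (M : ℕ) (f : Fin M → H),
      ∃ x : H, ‖x‖ = 1 ∧ (∀ i, ⟪f i, x⟫_ℂ = 0) ∧ ‖A x - (l : ℂ) • x‖ ≤ ε) :
    ∀ N : ℕ, ∃ e : Fin N → H,
      (∀ i j, ⟪e i, e j⟫_ℂ = if i = j then 1 else 0) ∧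
      (∀ i, ‖A (e i) - (l : ℂ) • (e i)‖ ≤ ε) := by
  intro N
  induction N with
  | zero => exact ⟨fun i => i.elim0, fun i => i.elim0, fun i => i.elim0⟩
  | succ n ih =>
    obtain ⟨e, he, hee⟩ := ih
    obtain ⟨x, hx1, hxo, hxe⟩ := h n e
    have hxx : ⟪x, x⟫_ℂ = 1 := by
      rw [inner_self_eq_norm_sq_to_K, hx1]; norm_num
    refine ⟨Fin.snoc e x, ?_, ?_⟩
    · intro i j
      refine Fin.lastCases ?_ (fun i' => ?_) i
      · refine Fin.lastCases ?_ (fun j' => ?_) j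
        · simp [Fin.snoc_last, hxx, hx1]
        · rw [Fin.snoc_last, Fin.snoc_castSucc,
            if_neg (Fin.castSucc_lt_last j').ne',
            inner_eq_zero_symm.mp (hxo j')]
      · refine Fin.lastCases ?_ (fun j' => ?_) j
        · rw [Fin.snoc_last, Fin.snoc_castSucc,
            if_neg (Fin.castSucc_lt_last i').ne, hxo i']
        · rw [Fin.snoc_castSucc, Fin.snoc_castSucc, he i' j']
          simp [Fin.castSucc_inj]
    · intro i
      refine Fin.lastCases ?_ (fun i' => ?_) i
      · rw [Fin.snoc_last]; exact hxe
      · rw [Fin.snoc_castSucc]; exact hee i'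


end H1

section H2
variable {H : Type*} [NormedAddCommGroup H] [InnerProductSpace ℂ H] [CompleteSpace H]

lemma weyl (A : H →L[ℂ] H) (hA : IsSelfAdjoint A) (hinf : ¬ FiniteDimensional ℂ H) :
    ∃ l : ℝ, ∀ ε : ℝ, 0 < ε → ∀ (M : ℕ) (f : Fin M → H),
      ∃ x : H, ‖x‖ = 1 ∧ (∀ i, ⟪f i, x⟫_ℂ = 0) ∧ ‖A x - (l : ℂ) • x‖ ≤ ε := by
  by_contra hcon
  push_neg at hcon
  -- Step 1: every point has a window with finite-dimensional bump range
  have hfd : ∀ l : ℝ, ∃ δ : ℝ, 0 < δ ∧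
      FiniteDimensional ℂ (LinearMap.range ((cfc (tri l δ) A : H →L[ℂ] H) : H →ₗ[ℂ] H)) := by
    intro l
    obtain ⟨ε, hε, M, f, hf⟩ := hcon l
    refine ⟨ε/2, by positivity, ?_⟩
    by_contra hV
    obtain ⟨x, hxV, hx1, hxorth⟩ := exists_unit_orthogonal _ hV f
    have hfix : cfc (tri l ε) A x = x := by
      obtain ⟨y, hy⟩ := LinearMap.mem_range.mp hxV
      have h1 : cfc (fun s => tri l ε s * tri l (ε/2) s) A
          = cfc (tri l ε) A * cfc (tri l (ε/2)) A :=
        cfc_mul _ _ A (tri_cont l ε).continuousOn (tri_cont l (ε/2)).continuousOn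
      have h2 : cfc (fun s => tri l ε s * tri l (ε/2) s) A = cfc (tri l (ε/2)) A := by
        apply cfc_congr; intro s _; exact tri_absorb hε s
      calc cfc (tri l ε) A x = cfc (tri l ε) A ((cfc (tri l (ε/2)) A) y) := congrArg (fun z => cfc (tri l ε) A z) hy.symm
        _ = (cfc (tri l ε) A * cfc (tri l (ε/2)) A) y := rfl
        _ = cfc (tri l (ε/2)) A y := by rw [← h1, h2]
        _ = x := hy
    have hAsub : cfc (fun s : ℝ => s - l) A = A - algebraMap ℝ (H →L[ℂ] H) l := by
      rw [cfc_sub (fun s : ℝ => s) (fun _ => l) A continuousOn_id continuousOn_const,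
        cfc_id' ℝ A hA, cfc_const l A hA]
    have hmul := cfc_mul (R := ℝ) (fun s : ℝ => s - l) (tri l ε) A
      ((continuous_id.sub continuous_const).continuousOn) (tri_cont l ε).continuousOn
    rw [hAsub] at hmul
    have hnorm : ‖cfc (fun s : ℝ => (s - l) * tri l ε s) A‖ ≤ ε :=
      norm_cfc_le hε.le (fun s _ => by rw [Real.norm_eq_abs]; exact tri_mul_id_bound hε s)
    have halg : (algebraMap ℝ (H →L[ℂ] H) l) x = (l : ℂ) • x := by
      rw [Algebra.algebraMap_eq_smul_one]
      simp [ContinuousLinearMap.smul_apply]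
    have hAx : A x - (l:ℂ) • x = (cfc (fun s : ℝ => (s - l) * tri l ε s) A) x := by
      rw [hmul, ContinuousLinearMap.mul_apply, hfix, ContinuousLinearMap.sub_apply, halg]
    have : ‖A x - (l:ℂ) • x‖ ≤ ε := by
      rw [hAx]
      calc ‖_‖ ≤ ‖cfc (fun s : ℝ => (s - l) * tri l ε s) A‖ * ‖x‖ :=
            ContinuousLinearMap.le_opNorm _ _
        _ ≤ ε := by rw [hx1, mul_one]; exact hnorm
    exact absurd this (not_le.mpr (hf x hx1 hxorth))
  choose δ hδpos hδfd using hfd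
  -- Step 2: cover the spectrum
  have hcov : ∃ t : Finset ℝ, spectrum ℝ A ⊆ ⋃ l ∈ t, Metric.ball l (δ l / 2) := by
    apply (spectrum.isCompact (a := A)).elim_finite_subcover
      (fun l => Metric.ball l (δ l / 2)) (fun _ => Metric.isOpen_ball)
    intro x hx
    exact Set.mem_iUnion.mpr ⟨x, Metric.mem_ball_self (by have := hδpos x; positivity)⟩
  obtain ⟨t, ht⟩ := hcov
  set F : ℝ → ℝ := ∑ l ∈ t, tri l (δ l) with hF
  have hFcont : ContinuousOn F (spectrum ℝ A) := by
    rw [hF, Finset.sum_fn]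
    exact (continuous_finset_sum _ (fun l _ => tri_cont l (δ l))).continuousOn
  have hone : ∀ x ∈ spectrum ℝ A, 1 ≤ F x := by
    intro x hx
    obtain ⟨l, hlt, hxl⟩ := Set.mem_iUnion₂.mp (ht hx)
    have h1 : tri l (δ l) x = 1 := by
      apply tri_eq_one (hδpos l)
      have := Metric.mem_ball.mp hxl
      rw [Real.dist_eq] at this
      linarith
    calc (1:ℝ) = tri l (δ l) x := h1.symm
      _ ≤ ∑ l' ∈ t, tri l' (δ l') x :=
          Finset.single_le_sum (fun i _ => tri_nonneg i (δ i) x) hlt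
      _ = F x := by rw [hF]; simp
  have hunit : IsUnit (cfc F A) := by
    rw [← spectrum.zero_notMem_iff ℝ]
    rw [cfc_map_spectrum F A hA hFcont]
    rintro ⟨x, hx, h0⟩
    have := hone x hx
    rw [h0] at this
    linarith
  obtain ⟨u, hu⟩ := hunit
  have hsum : cfc F A = ∑ l ∈ t, cfc (tri l (δ l)) A := by
    rw [hF]
    exact cfc_sum _ A t (fun l _ => (tri_cont l (δ l)).continuousOn)
  set C : H →L[ℂ] H := ((u⁻¹ : (H →L[ℂ] H)ˣ) : H →L[ℂ] H) with hC
  set p : Submodule ℂ H :=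
    t.sup (fun l => (LinearMap.range ((cfc (tri l (δ l)) A : H →L[ℂ] H) : H →ₗ[ℂ] H)).map (C : H →ₗ[ℂ] H)) with hp
  haveI : ∀ l : ℝ, FiniteDimensional ℂ
      ((LinearMap.range ((cfc (tri l (δ l)) A : H →L[ℂ] H) : H →ₗ[ℂ] H)).map (C : H →ₗ[ℂ] H)) := by
    intro l
    haveI := hδfd l
    infer_instance
  haveI hfdp : FiniteDimensional ℂ p := Submodule.finiteDimensional_finset_sup _ _
  have htop : p = ⊤ := by
    rw [eq_top_iff]
    intro x _
    have hx : x = ∑ l ∈ t, C ((cfc (tri l (δ l)) A) x) := by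
      have h1 : ((u⁻¹ : (H →L[ℂ] H)ˣ) : H →L[ℂ] H) * u = 1 := u.inv_mul
      calc x = (((u⁻¹ : (H →L[ℂ] H)ˣ) : H →L[ℂ] H) * u) x := by
            rw [h1, ContinuousLinearMap.one_apply]
        _ = C ((u : H →L[ℂ] H) x) := ContinuousLinearMap.mul_apply _ _ _
        _ = C ((cfc F A) x) := by rw [hu]
        _ = C ((∑ l ∈ t, cfc (tri l (δ l)) A) x) := by rw [hsum]
        _ = ∑ l ∈ t, C ((cfc (tri l (δ l)) A) x) := by
            rw [ContinuousLinearMap.sum_apply, map_sum]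
    rw [hx]
    apply Submodule.sum_mem
    intro l hl
    have hmem : C ((cfc (tri l (δ l)) A) x) ∈
        (LinearMap.range ((cfc (tri l (δ l)) A : H →L[ℂ] H) : H →ₗ[ℂ] H)).map (C : H →ₗ[ℂ] H) :=
      Submodule.mem_map.mpr ⟨(cfc (tri l (δ l)) A) x, LinearMap.mem_range_self _ x, by simp⟩
    exact (Finset.le_sup (f := fun l => (LinearMap.range ((cfc (tri l (δ l)) A : H →L[ℂ] H) : H →ₗ[ℂ] H)).map
      (C : H →ₗ[ℂ] H)) hl) hmem
  have : FiniteDimensional ℂ H := by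
    have h2 : FiniteDimensional ℂ (⊤ : Submodule ℂ H) := by rw [← htop]; exact hfdp
    exact (Submodule.topEquiv : (⊤ : Submodule ℂ H) ≃ₗ[ℂ] H).finiteDimensional
  exact hinf this


end H2

section HK
variable {H K : Type*} [NormedAddCommGroup H] [InnerProductSpace ℂ H]
  [NormedAddCommGroup K] [InnerProductSpace ℂ K]

lemma norm_tmul (τ : TensorSquare H K) (a b : H) : ‖τ.tmul a b‖ = ‖a‖ * ‖b‖ :=
  norm_eq_of_inner_self (by positivity) (by
    rw [τ.inner_tmul, inner_self_c, inner_self_c]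
    push_cast; ring)

lemma crossable_one_le [CompleteSpace H] [CompleteSpace K]
    (hinf : ¬ FiniteDimensional ℂ H) (τ : TensorSquare H K)
    (S Sstar : H →SL[starRingEnd ℂ] H) (hinv : ∀ x : H, S (S x) = x)
    (hadj : ∀ x y : H, ⟪Sstar y, x⟫_ℂ = ⟪S x, y⟫_ℂ)
    {T Tc : K →L[ℂ] K} (hrel : CrossRelB τ S Sstar T Tc) : 1 ≤ ‖T - 1‖ := by
  by_contra hlt
  push_neg at hlt
  set c := ‖T - 1‖ with hcdef
  have hc0 : 0 ≤ c := norm_nonneg _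
  -- the positive self-adjoint operator  A = S* S
  set A : H →L[ℂ] H := ContinuousLinearMap.mk
    { toFun := fun x => Sstar (S x)
      map_add' := fun x y => by simp
      map_smul' := fun m x => by simp }
    (Sstar.continuous.comp S.continuous) with hAdef
  have hAapp : ∀ x, A x = Sstar (S x) := fun _ => rfl
  have hsym : ∀ x y : H, ⟪A x, y⟫_ℂ = ⟪S y, S x⟫_ℂ := fun x y => hadj y (S x)
  have hA : IsSelfAdjoint A := by
    rw [ContinuousLinearMap.isSelfAdjoint_iff_isSymmetric]
    intro x y
    show ⟪A x, y⟫_ℂ = ⟪x, A y⟫_ℂ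
    calc ⟪A x, y⟫_ℂ = ⟪S y, S x⟫_ℂ := hsym x y
      _ = (starRingEnd ℂ) ⟪S x, S y⟫_ℂ := (inner_conj_symm _ _).symm
      _ = (starRingEnd ℂ) ⟪A y, x⟫_ℂ := by rw [hsym y x]
      _ = ⟪x, A y⟫_ℂ := inner_conj_symm _ _
  have hSle : ∀ x : H, ‖x‖ ≤ ‖S‖ * ‖S x‖ := fun x => by
    conv_lhs => rw [← hinv x]
    exact S.le_opNorm (S x)
  have hntH : Nontrivial H := by
    by_contra hn
    rw [not_nontrivial_iff_subsingleton] at hn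
    exact hinf (FiniteDimensional.of_injective (0 : H →ₗ[ℂ] ℂ)
      (fun a b _ => Subsingleton.elim a b))
  obtain ⟨x0, hx0⟩ := exists_ne (0 : H)
  have hS0 : 0 < ‖S‖ := by
    rcases (norm_nonneg S).lt_or_eq with h | h
    · exact h
    · exfalso
      have := hSle x0
      rw [← h, zero_mul] at this
      exact hx0 (norm_le_zero_iff.mp this)
  obtain ⟨l, hl⟩ := weyl A hA hinf
  have hquad : ∀ (ε' : ℝ) (x : H), ‖x‖ = 1 → ‖A x - (l:ℂ) • x‖ ≤ ε' →
      |‖S x‖^2 - l| ≤ ε' := by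
    intro ε' x hx1 hAx
    have h1 : ⟪A x - (l:ℂ) • x, x⟫_ℂ = ((‖S x‖^2 - l : ℝ) : ℂ) := by
      rw [inner_sub_left, inner_smul_left, hsym x x, inner_self_c, inner_self_c,
        hx1, Complex.conj_ofReal]
      push_cast; ring
    have h2 : |‖S x‖^2 - l| = ‖⟪A x - (l:ℂ) • x, x⟫_ℂ‖ := by
      rw [h1, Complex.norm_real, Real.norm_eq_abs]
    rw [h2]
    calc ‖⟪A x - (l:ℂ) • x, x⟫_ℂ‖ ≤ ‖A x - (l:ℂ) • x‖ * ‖x‖ := norm_inner_le_norm _ _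
      _ ≤ ε' := by rw [hx1, mul_one]; exact hAx
  have hlpos : 0 < l := by
    have key : ∀ ε' : ℝ, 0 < ε' → (‖S‖)⁻¹^2 ≤ l + ε' := by
      intro ε' hε'
      obtain ⟨x, hx1, -, hAx⟩ := hl ε' hε' 0 (fun i => i.elim0)
      have h1 := (abs_le.mp (hquad ε' x hx1 hAx)).2
      have h3 : 1 ≤ ‖S‖ * ‖S x‖ := by
        calc (1:ℝ) = ‖x‖ := hx1.symm
          _ ≤ ‖S‖ * ‖S x‖ := hSle x
      have h2 : ‖S‖⁻¹ ≤ ‖S x‖ := by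
        nlinarith [mul_inv_cancel₀ hS0.ne']
      have h4 : (‖S‖)⁻¹^2 ≤ ‖S x‖^2 := by
        apply pow_le_pow_left₀ (by positivity) h2
      linarith
    by_contra hnl
    push_neg at hnl
    have h5 := key ((‖S‖)⁻¹^2 / 2) (by positivity)
    have h6 : 0 < (‖S‖)⁻¹^2 := by positivity
    linarith
  set ε := l * (1 - c) / (2 * (1 + c)) with hεdef
  have hεpos : 0 < ε := by
    apply div_pos
    · nlinarith
    · nlinarith
  have hεlt : ε < l := by
    rw [hεdef, div_lt_iff₀ (by nlinarith)]
    nlinarith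
  have hkey : c * (l + ε) < l - ε := by
    have h7 : ε * (2 * (1 + c)) = l * (1 - c) := by
      rw [hεdef]; field_simp
    nlinarith
  set s := Real.sqrt (l - ε) with hsdef
  have hs2 : s^2 = l - ε := Real.sq_sqrt (by linarith)
  have hspos : 0 < s := Real.sqrt_pos.mpr (by linarith)
  set κ := s - c * (l + ε) / s with hκdef
  have hκpos : 0 < κ := by
    rw [hκdef, sub_pos, div_lt_iff₀ hspos]
    nlinarith
  -- master inequality
  have master : ∀ n : ℕ, 0 < n → (n : ℝ) * (s * κ) ≤ Real.sqrt n * ‖Tc‖ := by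
    intro n hn
    obtain ⟨e, he, hee⟩ := exists_on_family A l ε (hl ε hεpos) n
    have hnorm1 : ∀ i, ‖e i‖ = 1 := fun i =>
      norm_eq_of_inner_self zero_le_one (by rw [he i i, if_pos rfl]; norm_num)
    have htsq : ∀ i, l - ε ≤ ‖S (e i)‖^2 ∧ ‖S (e i)‖^2 ≤ l + ε := by
      intro i
      have h := abs_le.mp (hquad ε (e i) (hnorm1 i) (hee i))
      exact ⟨by linarith [h.1], by linarith [h.2]⟩
    have hts : ∀ i, s ≤ ‖S (e i)‖ := by
      intro i
      have h1 : s ≤ Real.sqrt (‖S (e i)‖^2) := Real.sqrt_le_sqrt (htsq i).1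
      rwa [Real.sqrt_sq (norm_nonneg _)] at h1
    have htpos : ∀ i, (0:ℝ) < ‖S (e i)‖ := fun i => lt_of_lt_of_le hspos (hts i)
    set g : Fin n → H := fun i => ((‖S (e i)‖ : ℂ))⁻¹ • S (e i) with hgdef
    have htne : ∀ i, ((‖S (e i)‖ : ℂ)) ≠ 0 := fun i => by
      exact_mod_cast (htpos i).ne'
    have hSe_inner : ∀ i, ⟪S (e i), S (e i)⟫_ℂ = ((‖S (e i)‖:ℂ))^2 := fun i =>
      inner_self_c _
    have hgg : ∀ i, ⟪g i, g i⟫_ℂ = 1 := by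
      intro i
      simp only [hgdef]
      rw [inner_smul_left, inner_smul_right, hSe_inner, map_inv₀, Complex.conj_ofReal, sq]
      have := htne i
      field_simp
    have hgnorm : ∀ i, ‖g i‖ = 1 := fun i =>
      norm_eq_of_inner_self zero_le_one (by rw [hgg i]; norm_num)
    have hgSe : ∀ i, ⟪g i, S (e i)⟫_ℂ = (‖S (e i)‖ : ℂ) := by
      intro i
      simp only [hgdef]
      rw [inner_smul_left, map_inv₀, Complex.conj_ofReal, hSe_inner, sq]
      have := htne i
      field_simp
    set i0 : Fin n := ⟨0, hn⟩ with hi0def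
    set w : H := Sstar (g i0) with hwdef
    have hwe : ⟪w, e i0⟫_ℂ = (‖S (e i0)‖ : ℂ) := by
      rw [hwdef, hadj (e i0) (g i0)]
      simp only [hgdef]
      rw [inner_smul_right, hSe_inner, sq]
      have := htne i0
      field_simp
    have hwnorm : ‖w‖ ≤ (l + ε) / s := by
      have h1 : w = ((‖S (e i0)‖:ℂ))⁻¹ • (A (e i0)) := by
        rw [hwdef]
        simp only [hgdef]
        rw [ContinuousLinearMap.map_smulₛₗ, map_inv₀, Complex.conj_ofReal]
        rfl
      have h2 : ‖A (e i0)‖ ≤ ε + l := by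
        calc ‖A (e i0)‖ = ‖(A (e i0) - (l:ℂ) • (e i0)) + (l:ℂ) • (e i0)‖ := by
              rw [sub_add_cancel]
          _ ≤ ‖A (e i0) - (l:ℂ) • (e i0)‖ + ‖(l:ℂ) • (e i0)‖ := norm_add_le _ _
          _ ≤ ε + l := by
              have h3 : ‖(l:ℂ) • (e i0)‖ = l := by
                rw [norm_smul, hnorm1, mul_one, Complex.norm_real, Real.norm_eq_abs,
                  abs_of_pos hlpos]
              rw [h3]
              exact add_le_add (hee i0) le_rfl
      rw [h1, norm_smul, norm_inv, Complex.norm_real, Real.norm_eq_abs,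
        abs_of_pos (htpos i0)]
      calc ‖S (e i0)‖⁻¹ * ‖A (e i0)‖ ≤ s⁻¹ * (ε + l) := by
            apply mul_le_mul (inv_anti₀ hspos (hts i0)) h2 (norm_nonneg _)
              (by positivity)
        _ = (l + ε) / s := by rw [inv_mul_eq_div, add_comm]
    -- crossing relation per index
    have hcross : ∀ i, ⟪τ.tmul (e i) (g i), Tc (τ.tmul (e i0) (g i0))⟫_ℂ
        = (‖S (e i)‖ : ℂ) * (‖S (e i0)‖ : ℂ)
          + ⟪τ.tmul (g i) w, (T - 1) (τ.tmul (S (e i)) (e i0))⟫_ℂ := by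
      intro i
      rw [hrel (e i) (g i) (e i0) (g i0), ← hwdef]
      have hsplit : T (τ.tmul (S (e i)) (e i0))
          = τ.tmul (S (e i)) (e i0) + (T - 1) (τ.tmul (S (e i)) (e i0)) := by
        rw [ContinuousLinearMap.sub_apply, ContinuousLinearMap.one_apply]
        abel
      rw [hsplit, inner_add_right, τ.inner_tmul, hgSe i, hwe]
    -- sum over i
    have hsum : (∑ i, ⟪τ.tmul (e i) (g i), Tc (τ.tmul (e i0) (g i0))⟫_ℂ)
        = ((∑ i, (‖S (e i)‖:ℂ)) * (‖S (e i0)‖:ℂ))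
          + ∑ i, ⟪τ.tmul (g i) w, (T - 1) (τ.tmul (S (e i)) (e i0))⟫_ℂ := by
      rw [Finset.sum_congr rfl (fun i _ => hcross i), Finset.sum_add_distrib,
        ← Finset.sum_mul]
    -- norm of the full sum
    have hΦnorm : ‖∑ i, τ.tmul (e i) (g i)‖ = Real.sqrt n := by
      apply norm_eq_of_inner_self (Real.sqrt_nonneg _)
      have hij : ∀ i j : Fin n, ⟪τ.tmul (e i) (g i), τ.tmul (e j) (g j)⟫_ℂ
          = if i = j then 1 else 0 := by
        intro i j
        rw [τ.inner_tmul, he i j]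
        by_cases h : i = j
        · subst h; simp [hgg, hgnorm]
        · simp [h]
      have hcast : ((Real.sqrt n : ℝ) : ℂ)^2 = (n : ℂ) := by
        have := Real.sq_sqrt (Nat.cast_nonneg (α := ℝ) n)
        exact_mod_cast congrArg (fun r : ℝ => (r : ℂ)) this
      rw [hcast, sum_inner]
      calc (∑ i, ⟪τ.tmul (e i) (g i), ∑ j, τ.tmul (e j) (g j)⟫_ℂ)
          = ∑ i, ∑ j, ⟪τ.tmul (e i) (g i), τ.tmul (e j) (g j)⟫_ℂ := by
            refine Finset.sum_congr rfl (fun i _ => ?_)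
            rw [inner_sum]
        _ = ∑ _i : Fin n, (1:ℂ) := by
            refine Finset.sum_congr rfl (fun i _ => ?_)
            simp [hij]
        _ = (n : ℂ) := by simp
    have hZ1 : ‖∑ i, ⟪τ.tmul (e i) (g i), Tc (τ.tmul (e i0) (g i0))⟫_ℂ‖
        ≤ Real.sqrt n * ‖Tc‖ := by
      rw [← sum_inner]
      have hΨnorm : ‖τ.tmul (e i0) (g i0)‖ = 1 := by
        rw [norm_tmul, hnorm1, hgnorm, mul_one]
      calc ‖⟪∑ i, τ.tmul (e i) (g i), Tc (τ.tmul (e i0) (g i0))⟫_ℂ‖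
          ≤ ‖∑ i, τ.tmul (e i) (g i)‖ * ‖Tc (τ.tmul (e i0) (g i0))‖ :=
            norm_inner_le_norm _ _
        _ ≤ Real.sqrt n * ‖Tc‖ := by
            rw [hΦnorm]
            apply mul_le_mul_of_nonneg_left ?_ (Real.sqrt_nonneg _)
            calc ‖Tc (τ.tmul (e i0) (g i0))‖ ≤ ‖Tc‖ * ‖τ.tmul (e i0) (g i0)‖ :=
                  Tc.le_opNorm _
              _ = ‖Tc‖ := by rw [hΨnorm, mul_one]
    have hErr : ‖∑ i, ⟪τ.tmul (g i) w, (T - 1) (τ.tmul (S (e i)) (e i0))⟫_ℂ‖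
        ≤ c * ‖w‖ * ∑ i, ‖S (e i)‖ := by
      calc ‖∑ i, ⟪τ.tmul (g i) w, (T - 1) (τ.tmul (S (e i)) (e i0))⟫_ℂ‖
          ≤ ∑ i, ‖⟪τ.tmul (g i) w, (T - 1) (τ.tmul (S (e i)) (e i0))⟫_ℂ‖ :=
            norm_sum_le _ _
        _ ≤ ∑ i, c * ‖w‖ * ‖S (e i)‖ := by
            refine Finset.sum_le_sum (fun i _ => ?_)
            calc ‖⟪τ.tmul (g i) w, (T - 1) (τ.tmul (S (e i)) (e i0))⟫_ℂ‖
                ≤ ‖τ.tmul (g i) w‖ * ‖(T - 1) (τ.tmul (S (e i)) (e i0))‖ :=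
                  norm_inner_le_norm _ _
              _ ≤ (‖g i‖ * ‖w‖) * (c * (‖S (e i)‖ * ‖e i0‖)) := by
                  apply mul_le_mul
                  · rw [norm_tmul]
                  · calc ‖(T - 1) (τ.tmul (S (e i)) (e i0))‖
                        ≤ ‖T - 1‖ * ‖τ.tmul (S (e i)) (e i0)‖ := (T - 1).le_opNorm _
                      _ = c * (‖S (e i)‖ * ‖e i0‖) := by rw [← hcdef, norm_tmul]
                  · exact norm_nonneg _
                  · positivity
              _ = c * ‖w‖ * ‖S (e i)‖ := by rw [hgnorm, hnorm1]; ring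
        _ = c * ‖w‖ * ∑ i, ‖S (e i)‖ := by rw [← Finset.mul_sum]
    have hmainnorm : ‖(∑ i, (‖S (e i)‖:ℂ)) * (‖S (e i0)‖:ℂ)‖
        = (∑ i, ‖S (e i)‖) * ‖S (e i0)‖ := by
      have h1 : (∑ i, (‖S (e i)‖:ℂ)) = ((∑ i, ‖S (e i)‖ : ℝ) : ℂ) := by
        push_cast; rfl
      rw [h1, ← Complex.ofReal_mul, Complex.norm_real, Real.norm_eq_abs,
        abs_of_nonneg]
      exact mul_nonneg (Finset.sum_nonneg fun i _ => (htpos i).le) (htpos i0).le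
    have hSsum : (n:ℝ) * s ≤ ∑ i, ‖S (e i)‖ := by
      calc (n:ℝ) * s = ∑ _i : Fin n, s := by
            rw [Finset.sum_const, Finset.card_univ, Fintype.card_fin, nsmul_eq_mul]
        _ ≤ ∑ i, ‖S (e i)‖ := Finset.sum_le_sum (fun i _ => hts i)
    have hcomb : (∑ i, ‖S (e i)‖) * ‖S (e i0)‖
        ≤ Real.sqrt n * ‖Tc‖ + c * ‖w‖ * ∑ i, ‖S (e i)‖ := by
      have h1 : (∑ i, (‖S (e i)‖:ℂ)) * (‖S (e i0)‖:ℂ)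
          = (∑ i, ⟪τ.tmul (e i) (g i), Tc (τ.tmul (e i0) (g i0))⟫_ℂ)
            - ∑ i, ⟪τ.tmul (g i) w, (T - 1) (τ.tmul (S (e i)) (e i0))⟫_ℂ := by
        rw [hsum]; ring
      calc (∑ i, ‖S (e i)‖) * ‖S (e i0)‖
          = ‖(∑ i, (‖S (e i)‖:ℂ)) * (‖S (e i0)‖:ℂ)‖ := hmainnorm.symm
        _ = ‖(∑ i, ⟪τ.tmul (e i) (g i), Tc (τ.tmul (e i0) (g i0))⟫_ℂ)
            - ∑ i, ⟪τ.tmul (g i) w, (T - 1) (τ.tmul (S (e i)) (e i0))⟫_ℂ‖ := by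
            rw [h1]
        _ ≤ ‖∑ i, ⟪τ.tmul (e i) (g i), Tc (τ.tmul (e i0) (g i0))⟫_ℂ‖
            + ‖∑ i, ⟪τ.tmul (g i) w, (T - 1) (τ.tmul (S (e i)) (e i0))⟫_ℂ‖ :=
            norm_sub_le _ _
        _ ≤ Real.sqrt n * ‖Tc‖ + c * ‖w‖ * ∑ i, ‖S (e i)‖ := add_le_add hZ1 hErr
    have hfac : κ ≤ ‖S (e i0)‖ - c * ‖w‖ := by
      have h1 : c * ‖w‖ ≤ c * ((l + ε)/s) := mul_le_mul_of_nonneg_left hwnorm hc0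
      have h2 := hts i0
      have h3 : c * (l + ε) / s = c * ((l + ε)/s) := by ring
      rw [hκdef, h3]
      linarith
    have hSnn : (0:ℝ) ≤ ∑ i, ‖S (e i)‖ := Finset.sum_nonneg fun i _ => (htpos i).le
    calc (n:ℝ) * (s * κ) = ((n:ℝ) * s) * κ := by ring
      _ ≤ (∑ i, ‖S (e i)‖) * κ := mul_le_mul_of_nonneg_right hSsum hκpos.le
      _ ≤ (∑ i, ‖S (e i)‖) * (‖S (e i0)‖ - c * ‖w‖) :=
          mul_le_mul_of_nonneg_left hfac hSnn
      _ = (∑ i, ‖S (e i)‖) * ‖S (e i0)‖ - c * ‖w‖ * ∑ i, ‖S (e i)‖ := by ring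
      _ ≤ Real.sqrt n * ‖Tc‖ := by linarith
  -- conclude the contradiction
  obtain ⟨n0, hn0⟩ := exists_nat_gt ((‖Tc‖ / (s * κ))^2)
  set n := max n0 1 with hndef
  have hn1 : 0 < n := lt_of_lt_of_le one_pos (le_max_right n0 1)
  have h1 := master n hn1
  have hsq : Real.sqrt n * Real.sqrt n = (n:ℝ) := Real.mul_self_sqrt (Nat.cast_nonneg n)
  have hsn : 0 < Real.sqrt n := Real.sqrt_pos.mpr (by exact_mod_cast hn1)
  have h2 : Real.sqrt n * (s * κ) ≤ ‖Tc‖ := by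
    nlinarith [h1, hsq, hsn, mul_pos hspos hκpos]
  have h3 : Real.sqrt n ≤ ‖Tc‖ / (s * κ) := by
    rw [le_div_iff₀ (by positivity)]
    exact h2
  have h4 : (n:ℝ) ≤ (‖Tc‖ / (s * κ))^2 := by
    calc (n:ℝ) = Real.sqrt n * Real.sqrt n := hsq.symm
      _ = (Real.sqrt n)^2 := (sq (Real.sqrt n)).symm
      _ ≤ (‖Tc‖ / (s * κ))^2 := pow_le_pow_left₀ (Real.sqrt_nonneg _) h3 2
  have h5 : (n0 : ℝ) ≤ (n : ℝ) := Nat.cast_le.mpr (le_max_left n0 1)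
  linarith


end HK

end CrossHelper

/-- For a bounded antilinear involution `S` on an infinite-dimensional
Hilbert space, the infimum of `‖T - 1‖` over all `S`-crossable `T` equals `1`; in particular
the crossable operators are not norm dense in `B(H ⊗ H)`. -/
theorem dist_one_to_crossable
    [NormedAddCommGroup H] [InnerProductSpace ℂ H] [CompleteSpace H]
    [SecondCountableTopology H]
    [NormedAddCommGroup K] [InnerProductSpace ℂ K] [CompleteSpace K]
    (hinf : ¬ FiniteDimensional ℂ H)
    (τ : TensorSquare H K)
    (S Sstar : H →SL[starRingEnd ℂ] H)
    (hinv : ∀ x : H, S (S x) = x)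
    (hadj : ∀ x y : H, ⟪Sstar y, x⟫_ℂ = ⟪S x, y⟫_ℂ) :
    sInf {r : ℝ | ∃ T Tc : K →L[ℂ] K, CrossRelB τ S Sstar T Tc ∧ r = ‖T - 1‖} = 1 ∧
    ¬ Dense {T : K →L[ℂ] K | ∃ Tc : K →L[ℂ] K, CrossRelB τ S Sstar T Tc} := by
  classical
  have hntH : Nontrivial H := by
    by_contra hn
    rw [not_nontrivial_iff_subsingleton] at hn
    exact hinf (FiniteDimensional.of_injective (0 : H →ₗ[ℂ] ℂ)
      (fun a b _ => Subsingleton.elim a b))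
  obtain ⟨x0, hx0⟩ := exists_ne (0 : H)
  have hntK : Nontrivial K := by
    refine nontrivial_of_ne (τ.tmul x0 x0) 0 (fun h => ?_)
    have h1 : ⟪τ.tmul x0 x0, τ.tmul x0 x0⟫_ℂ = 0 := by rw [h, inner_zero_right]
    rw [τ.inner_tmul] at h1
    exact inner_self_ne_zero.mpr hx0 (by
      rcases mul_eq_zero.mp h1 with h2 | h2 <;> exact h2)
  have hmem1 : (1:ℝ) ∈ {r : ℝ | ∃ T Tc : K →L[ℂ] K, CrossRelB τ S Sstar T Tc ∧ r = ‖T - 1‖} := by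
    refine ⟨0, 0, fun φ₁ φ₂ ψ₁ ψ₂ => by simp, ?_⟩
    rw [zero_sub, norm_neg, ContinuousLinearMap.one_def, ContinuousLinearMap.norm_id]
  have hlb : ∀ r ∈ {r : ℝ | ∃ T Tc : K →L[ℂ] K, CrossRelB τ S Sstar T Tc ∧ r = ‖T - 1‖},
      1 ≤ r := by
    rintro r ⟨T, Tc, hrel, rfl⟩
    exact CrossHelper.crossable_one_le hinf τ S Sstar hinv hadj hrel
  constructor
  · exact le_antisymm (csInf_le ⟨1, hlb⟩ hmem1) (le_csInf ⟨1, hmem1⟩ hlb)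
  · intro hd
    obtain ⟨T, hT1, hT2⟩ :=
      (Metric.dense_iff.mp hd (1 : K →L[ℂ] K) 1 one_pos)
    obtain ⟨Tc, hrel⟩ := hT2
    have h1 : 1 ≤ ‖T - 1‖ := CrossHelper.crossable_one_le hinf τ S Sstar hinv hadj hrel
    have h2 : dist T (1 : K →L[ℂ] K) < 1 := Metric.mem_ball.mp hT1
    rw [dist_eq_norm] at h2
    linarith
end
end

section
/- Let S be a bounded antilinear involution with polar decomposition S = JΔ^{1/2}. For S-crossable T, the fourth power of the crossing map is given by Cross_S⁴(T) = (Δ⊗Δ) T (Δ^{-1}⊗Δ^{-1}). In particular, if S is antiunitary then Cross_S⁴ = identity on crossable operators. -/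
noncomputable section
open scoped InnerProductSpace ComplexConjugate

variable {H K : Type*}

section Aux
variable [NormedAddCommGroup H] [InnerProductSpace ℂ H]
  [NormedAddCommGroup K] [InnerProductSpace ℂ K]

/-- If two continuous maps into `ℂ`, both linear in the obvious sense, agree on all
`tmul` vectors, they agree everywhere (density of the span of tmuls). -/
lemma TensorSquare.ext_fun (τ : TensorSquare H K) (f g : K → ℂ)
    (hf : Continuous f) (hg : Continuous g)
    (hfa : ∀ x y : K, f (x + y) = f x + f y) (hga : ∀ x y : K, g (x + y) = g x + g y)
    (hfs : ∀ (c : ℂ) (x : K), f (c • x) = c * f x) (hgs : ∀ (c : ℂ) (x : K), g (c • x) = c * g x)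
    (h : ∀ a b : H, f (τ.tmul a b) = g (τ.tmul a b)) : f = g := by
  apply Continuous.ext_on τ.dense_span hf hg
  intro x hx
  induction hx using Submodule.span_induction with
  | mem x hx =>
      obtain ⟨p, rfl⟩ := hx
      exact h p.1 p.2
  | zero =>
      have hf0 : f 0 = 0 := by
        have := hfs 0 0; simpa using this
      have hg0 : g 0 = 0 := by
        have := hgs 0 0; simpa using this
      simp [hf0, hg0]
  | add x y hx hy ihx ihy => simp only [hfa, hga, ihx, ihy]
  | smul c x hx ih => simp only [hfs, hgs, ih]

/-- Move `D = Δ ⊗ Δ` across the inner product (self-adjointness of `Δ`). -/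
lemma moveD (τ : TensorSquare H K) (S Sstar : H →SL[starRingEnd ℂ] H)
    (hadj : ∀ x y : H, ⟪Sstar y, x⟫_ℂ = ⟪S x, y⟫_ℂ)
    (D : K →L[ℂ] K)
    (hD : ∀ v w : H, D (τ.tmul v w) = τ.tmul (Sstar (S v)) (Sstar (S w)))
    (a b : H) (z : K) :
    ⟪τ.tmul a b, D z⟫_ℂ = ⟪τ.tmul (Sstar (S a)) (Sstar (S b)), z⟫_ℂ := by
  have key : ∀ u v : H, ⟪u, Sstar (S v)⟫_ℂ = ⟪Sstar (S u), v⟫_ℂ := by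
    intro u v
    have h1 : ⟪Sstar (S u), v⟫_ℂ = ⟪S v, S u⟫_ℂ := hadj v (S u)
    have h2 : ⟪Sstar (S v), u⟫_ℂ = ⟪S u, S v⟫_ℂ := hadj u (S v)
    rw [h1, ← inner_conj_symm, h2, inner_conj_symm]
  have := congrFun (τ.ext_fun (fun z => ⟪τ.tmul a b, D z⟫_ℂ)
    (fun z => ⟪τ.tmul (Sstar (S a)) (Sstar (S b)), z⟫_ℂ)
    (continuous_const.inner D.continuous)
    (continuous_const.inner continuous_id)
    (fun x y => by simp [inner_add_right])
    (fun x y => by simp [inner_add_right])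
    (fun c x => by simp [inner_smul_right])
    (fun c x => by simp [inner_smul_right])
    (fun c d => by
      beta_reduce
      rw [hD, τ.inner_tmul, τ.inner_tmul, key a c, key b d])) z
  exact this

/-- If two continuous linear maps have the same matrix elements on `tmul` vectors,
they are equal. -/
lemma TensorSquare.op_ext (τ : TensorSquare H K) (f g : K →L[ℂ] K)
    (h : ∀ a b c d : H, ⟪τ.tmul a b, f (τ.tmul c d)⟫_ℂ = ⟪τ.tmul a b, g (τ.tmul c d)⟫_ℂ) :
    f = g := by
  -- First extend in the left slot, for fixed tmul on the right.
  have step1 : ∀ (c d : H) (y : K), ⟪y, f (τ.tmul c d)⟫_ℂ = ⟪y, g (τ.tmul c d)⟫_ℂ := by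
    intro c d
    have := τ.ext_fun (fun y => (starRingEnd ℂ) ⟪y, f (τ.tmul c d)⟫_ℂ)
      (fun y => (starRingEnd ℂ) ⟪y, g (τ.tmul c d)⟫_ℂ)
      (continuous_star.comp (continuous_id.inner continuous_const))
      (continuous_star.comp (continuous_id.inner continuous_const))
      (fun x y => by simp [inner_add_left])
      (fun x y => by simp [inner_add_left])
      (fun cc x => by simp [inner_smul_left, mul_comm])
      (fun cc x => by simp [inner_smul_left, mul_comm])
      (fun a b => by beta_reduce; rw [h a b c d])
    intro y
    have := congrFun this y
    simpa using congrArg (starRingEnd ℂ) this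
  -- Now extend in the right slot.
  have step2 : ∀ z : K, f z = g z := by
    intro z
    have hz : ∀ y : K, ⟪y, f z⟫_ℂ = ⟪y, g z⟫_ℂ := by
      intro y
      have := congrFun (τ.ext_fun (fun z => ⟪y, f z⟫_ℂ) (fun z => ⟪y, g z⟫_ℂ)
        (continuous_const.inner f.continuous) (continuous_const.inner g.continuous)
        (fun x₁ x₂ => by simp [inner_add_right])
        (fun x₁ x₂ => by simp [inner_add_right])
        (fun c x => by simp [inner_smul_right])
        (fun c x => by simp [inner_smul_right])
        (fun c d => step1 c d y)) z
      exact this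
    have : ⟪f z - g z, f z - g z⟫_ℂ = 0 := by
      rw [inner_sub_right, hz]; ring
    exact sub_eq_zero.mp (inner_self_eq_zero.mp this)
  exact ContinuousLinearMap.ext step2

end Aux

/-- For a bounded antilinear involution `S = JΔ^{1/2}` (so `Δ = S*S` and
`Δ⁻¹ = S S*`), the fourth power of the crossing map satisfies
`Cross_S⁴(T) = (Δ ⊗ Δ) T (Δ⁻¹ ⊗ Δ⁻¹)`; in particular `Cross_S⁴ = id` if `S` is antiunitary
(i.e. `S* = S`). Here `D` realizes `Δ ⊗ Δ` and `Dinv` realizes `Δ⁻¹ ⊗ Δ⁻¹`. -/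
theorem crossing_map_fourth_power
    [NormedAddCommGroup H] [InnerProductSpace ℂ H] [CompleteSpace H]
    [NormedAddCommGroup K] [InnerProductSpace ℂ K] [CompleteSpace K]
    (τ : TensorSquare H K)
    (S Sstar : H →SL[starRingEnd ℂ] H)
    (hinv : ∀ x : H, S (S x) = x)
    (hadj : ∀ x y : H, ⟪Sstar y, x⟫_ℂ = ⟪S x, y⟫_ℂ)
    (D Dinv : K →L[ℂ] K)
    (hD : ∀ v w : H, D (τ.tmul v w) = τ.tmul (Sstar (S v)) (Sstar (S w)))
    (hDinv : ∀ v w : H, Dinv (τ.tmul v w) = τ.tmul (S (Sstar v)) (S (Sstar w)))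
    (T T₁ T₂ T₃ T₄ : K →L[ℂ] K)
    (h1 : CrossRelB τ S Sstar T T₁) (h2 : CrossRelB τ S Sstar T₁ T₂)
    (h3 : CrossRelB τ S Sstar T₂ T₃) (h4 : CrossRelB τ S Sstar T₃ T₄) :
    T₄ = D.comp (T.comp Dinv) ∧ ((∀ x : H, Sstar x = S x) → T₄ = T) := by
  -- Iterate the crossing relation.
  have t2 : ∀ φ₁ φ₂ ψ₁ ψ₂ : H,
      ⟪τ.tmul φ₁ φ₂, T₂ (τ.tmul ψ₁ ψ₂)⟫_ℂ
        = ⟪τ.tmul (Sstar ψ₂) (Sstar ψ₁), T (τ.tmul (S φ₂) (S φ₁))⟫_ℂ := by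
    intro φ₁ φ₂ ψ₁ ψ₂
    rw [h2 φ₁ φ₂ ψ₁ ψ₂, h1 φ₂ (Sstar ψ₂) (S φ₁) ψ₁]
  have t3 : ∀ φ₁ φ₂ ψ₁ ψ₂ : H,
      ⟪τ.tmul φ₁ φ₂, T₃ (τ.tmul ψ₁ ψ₂)⟫_ℂ
        = ⟪τ.tmul (Sstar ψ₁) (Sstar (S φ₁)), T (τ.tmul (S (Sstar ψ₂)) (S φ₂))⟫_ℂ := by
    intro φ₁ φ₂ ψ₁ ψ₂
    rw [h3 φ₁ φ₂ ψ₁ ψ₂, t2 φ₂ (Sstar ψ₂) (S φ₁) ψ₁]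
  have t4 : ∀ φ₁ φ₂ ψ₁ ψ₂ : H,
      ⟪τ.tmul φ₁ φ₂, T₄ (τ.tmul ψ₁ ψ₂)⟫_ℂ
        = ⟪τ.tmul (Sstar (S φ₁)) (Sstar (S φ₂)),
            T (τ.tmul (S (Sstar ψ₁)) (S (Sstar ψ₂)))⟫_ℂ := by
    intro φ₁ φ₂ ψ₁ ψ₂
    rw [h4 φ₁ φ₂ ψ₁ ψ₂, t3 φ₂ (Sstar ψ₂) (S φ₁) ψ₁]
  have main : T₄ = D.comp (T.comp Dinv) := by
    apply τ.op_ext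
    intro a b c d
    rw [t4 a b c d]
    simp only [ContinuousLinearMap.comp_apply]
    rw [moveD τ S Sstar hadj D hD a b, hDinv c d]
  refine ⟨main, fun hSS => ?_⟩
  rw [main]
  apply τ.op_ext
  intro a b c d
  simp only [ContinuousLinearMap.comp_apply]
  rw [hDinv c d, hSS c, hSS d, hinv c, hinv d,
    moveD τ S Sstar hadj D hD a b, hSS (S a), hSS (S b), hinv a, hinv b]
end
end
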